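/- arXiv:1407.8303 — 6 statements merged into one kernel-verified Lean document; each statement's English description precedes it below -/
import Mathlib

section
/- Let k ∈ ℕ and s ∈ (k−1, k). Let u and v be k times continuously differentiable on [−1, 1], and assume I_−^{k−s} u is k times continuously differentiable on [−1, 1]. Then ∫_{−1}^{1} D_−^s u(x) · v(x) dx = ∫_{−1}^{1} u(x) · ^C D_+^s v(x) dx + Σ_{j=0}^{k−1} (−1)^j [ v^{(j)}(x) · (d/dx)^{k−j−1}[I_−^{k−s} u](x) ] evaluated from x = −1 to x = 1. -/
open MeasureTheory Filter Finset
open intervalIntegral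



lemma itDeriv_interior (g : ℝ → ℝ) (n : ℕ) {x : ℝ} (hx : x ∈ Set.Ioo (-1:ℝ) 1) :
    iteratedDeriv n g x = iteratedDerivWithin n g (Set.Icc (-1) 1) x := by
  rw [← iteratedDerivWithin_univ]
  simp only [iteratedDerivWithin_eq_iteratedFDerivWithin]
  have h1 := iteratedFDerivWithin_inter_open (𝕜 := ℝ) (f := g) (n := n)
    (s := Set.univ) (u := Set.Ioo (-1:ℝ) 1) isOpen_Ioo hx
  have h2 := iteratedFDerivWithin_inter_open (𝕜 := ℝ) (f := g) (n := n)
    (s := Set.Icc (-1:ℝ) 1) (u := Set.Ioo (-1:ℝ) 1) isOpen_Ioo hx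
  rw [Set.univ_inter] at h1
  rw [Set.inter_eq_right.mpr Set.Ioo_subset_Icc_self] at h2
  rw [← h1, ← h2]

lemma uIcc_eq : Set.uIcc (-1:ℝ) 1 = Set.Icc (-1) 1 := Set.uIcc_of_le (by norm_num)

lemma ibp (n : ℕ) (f : ℝ → ℝ) (hf : ContDiffOn ℝ n f (Set.Icc (-1) 1)) :
    ∀ w : ℝ → ℝ, ContDiffOn ℝ n w (Set.Icc (-1) 1) →
    ∫ x in (-1:ℝ)..1, iteratedDerivWithin n f (Set.Icc (-1) 1) x * w x
      = ((-1:ℝ)^n * ∫ x in (-1:ℝ)..1, f x * iteratedDerivWithin n w (Set.Icc (-1) 1) x)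
        + ∑ j ∈ Finset.range n, (-1:ℝ)^j *
            (iteratedDerivWithin j w (Set.Icc (-1) 1) 1 *
               iteratedDerivWithin (n-j-1) f (Set.Icc (-1) 1) 1
             - iteratedDerivWithin j w (Set.Icc (-1) 1) (-1) *
               iteratedDerivWithin (n-j-1) f (Set.Icc (-1) 1) (-1)) := by
  have hUD : UniqueDiffOn ℝ (Set.Icc (-1:ℝ) 1) := uniqueDiffOn_Icc (by norm_num)
  induction n with
  | zero => intro w _; simp [iteratedDerivWithin_zero]
  | succ n IH =>
    intro w hw
    set S := Set.Icc (-1:ℝ) 1 with hS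
    have hfn : ContDiffOn ℝ n f S := hf.of_le (by exact_mod_cast Nat.le_succ n)
    have hw' : ContDiffOn ℝ n (derivWithin w S) S := hw.derivWithin hUD (by exact_mod_cast le_refl (n+1))
    -- single integration by parts
    have hcDn : ContinuousOn (iteratedDerivWithin n f S) S :=
      hf.continuousOn_iteratedDerivWithin (by exact_mod_cast Nat.le_succ n) hUD
    have hcDn1 : ContinuousOn (iteratedDerivWithin (n+1) f S) S :=
      hf.continuousOn_iteratedDerivWithin (le_refl _) hUD
    have hcw' : ContinuousOn (derivWithin w S) S := hw'.continuousOn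
    have hdf : DifferentiableOn ℝ (iteratedDerivWithin n f S) S :=
      hf.differentiableOn_iteratedDerivWithin (by exact_mod_cast Nat.lt_succ_self n) hUD
    have hdw : DifferentiableOn ℝ w S := hw.differentiableOn (by simp)
    have key := integral_deriv_mul_eq_sub_of_hasDerivAt
      (u := iteratedDerivWithin n f S) (v := w)
      (u' := iteratedDerivWithin (n+1) f S) (v' := derivWithin w S)
      (a := (-1:ℝ)) (b := 1)
      (by rw [uIcc_eq]; exact hcDn) (by rw [uIcc_eq]; exact hw.continuousOn)
      (fun x hx => by
        rw [min_eq_left (by norm_num : (-1:ℝ) ≤ 1), max_eq_right (by norm_num : (-1:ℝ) ≤ 1)] at hx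
        have hxS : x ∈ S := Set.Ioo_subset_Icc_self hx
        have := (hdf x hxS).hasDerivWithinAt
        rw [← iteratedDerivWithin_succ] at this
        exact this.hasDerivAt (Icc_mem_nhds hx.1 hx.2))
      (fun x hx => by
        rw [min_eq_left (by norm_num : (-1:ℝ) ≤ 1), max_eq_right (by norm_num : (-1:ℝ) ≤ 1)] at hx
        have hxS : x ∈ S := Set.Ioo_subset_Icc_self hx
        exact ((hdw x hxS).hasDerivWithinAt).hasDerivAt (Icc_mem_nhds hx.1 hx.2))
      ((hcDn1.mono (by rw [uIcc_eq])).intervalIntegrable)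
      ((hcw'.mono (by rw [uIcc_eq])).intervalIntegrable)
    -- split the integral
    have hi1 : IntervalIntegrable (fun x => iteratedDerivWithin (n+1) f S x * w x) volume (-1) 1 :=
      ((hcDn1.mul hw.continuousOn).mono (by rw [uIcc_eq])).intervalIntegrable
    have hi2 : IntervalIntegrable (fun x => iteratedDerivWithin n f S x * derivWithin w S x) volume (-1) 1 :=
      ((hcDn.mul hcw').mono (by rw [uIcc_eq])).intervalIntegrable
    rw [integral_add hi1 hi2] at key
    have step : ∫ x in (-1:ℝ)..1, iteratedDerivWithin (n+1) f S x * w x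
        = iteratedDerivWithin n f S 1 * w 1 - iteratedDerivWithin n f S (-1) * w (-1)
          - ∫ x in (-1:ℝ)..1, iteratedDerivWithin n f S x * derivWithin w S x := by
      linarith [key]
    rw [step, IH hfn (derivWithin w S) hw']
    -- rewrite iterated derivs of derivWithin w S
    have hwsucc : ∀ j : ℕ, ∀ x ∈ S, iteratedDerivWithin j (derivWithin w S) S x
        = iteratedDerivWithin (j+1) w S x := by
      intro j x hx
      rw [iteratedDerivWithin_succ']
    have h1S : (1:ℝ) ∈ S := by simp [hS]
    have hm1S : (-1:ℝ) ∈ S := by simp [hS]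
    have hint : (∫ x in (-1:ℝ)..1, f x * iteratedDerivWithin n (derivWithin w S) S x)
        = ∫ x in (-1:ℝ)..1, f x * iteratedDerivWithin (n+1) w S x := by
      apply intervalIntegral.integral_congr
      intro x hx
      rw [uIcc_eq] at hx
      dsimp only
      rw [hwsucc n x hx]
    rw [hint]
    rw [Finset.sum_range_succ' _ n]
    have hre : ∀ j ∈ Finset.range n, (-1:ℝ)^j *
            (iteratedDerivWithin j (derivWithin w S) S 1 * iteratedDerivWithin (n-j-1) f S 1
             - iteratedDerivWithin j (derivWithin w S) S (-1) * iteratedDerivWithin (n-j-1) f S (-1))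
        = -((-1:ℝ)^(j+1) *
            (iteratedDerivWithin (j+1) w S 1 * iteratedDerivWithin (n+1-(j+1)-1) f S 1
             - iteratedDerivWithin (j+1) w S (-1) * iteratedDerivWithin (n+1-(j+1)-1) f S (-1))) := by
      intro j hj
      rw [hwsucc j 1 h1S, hwsucc j (-1) hm1S]
      have : n+1-(j+1)-1 = n-j-1 := by omega
      rw [this, pow_succ]
      ring
    rw [Finset.sum_congr rfl hre, Finset.sum_neg_distrib]
    simp only [iteratedDerivWithin_zero, pow_zero, pow_succ, Nat.sub_zero, Nat.add_sub_cancel]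
    ring


lemma ker_intble {ρ : ℝ} (hρ : 0 < ρ) (x c : ℝ) :
    IntervalIntegrable (fun y => (x - y) ^ (ρ-1)) volume c x := by
  have h := (intervalIntegrable_rpow' (a := x - c) (b := 0) (by linarith : (-1:ℝ) < ρ - 1)).comp_sub_left x
  simpa using h

lemma ker_eval {ρ : ℝ} (hρ : 0 < ρ) {x : ℝ} (hx : (-1:ℝ) ≤ x) :
    ∫ y in (-1:ℝ)..x, (x - y) ^ (ρ-1) = (x+1)^ρ / ρ := by
  rw [intervalIntegral.integral_comp_sub_left (fun t => t ^ (ρ-1)) x]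
  rw [integral_rpow (Or.inl (by linarith : (-1:ℝ) < ρ - 1))]
  rw [sub_self, sub_neg_eq_add]
  rw [Real.zero_rpow (by linarith : ρ - 1 + 1 ≠ 0)]
  rw [sub_add_cancel, sub_zero]

noncomputable def extIcc (f : ℝ → ℝ) : ℝ → ℝ := fun x => f (max (-1) (min 1 x))

lemma extIcc_cont {f : ℝ → ℝ} (hf : ContinuousOn f (Set.Icc (-1) 1)) :
    Continuous (extIcc f) := by
  apply hf.comp_continuous
  · exact continuous_const.max (continuous_const.min continuous_id)
  · intro x
    constructor
    · exact le_max_left _ _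
    · exact max_le (by norm_num) (min_le_left _ _)

lemma extIcc_eq {f : ℝ → ℝ} {x : ℝ} (hx : x ∈ Set.Icc (-1:ℝ) 1) : extIcc f x = f x := by
  unfold extIcc
  rw [min_eq_right hx.2, max_eq_right hx.1]

lemma fub {ρ : ℝ} (hρ0 : 0 < ρ) (U W : ℝ → ℝ) (hU : Continuous U) (hW : Continuous W) :
    ∫ x in (-1:ℝ)..1, (∫ y in (-1:ℝ)..x, (x-y)^(ρ-1) * U y) * W x
      = ∫ y in (-1:ℝ)..1, U y * ∫ x in y..1, (x-y)^(ρ-1) * W x := by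
  set μ := volume.restrict (Set.Ioc (-1:ℝ) 1) with hμ
  set F : ℝ × ℝ → ℝ := fun p => Real.exp (Real.log (p.1 - p.2) * (ρ-1)) * U p.2 * W p.1 with hF
  set T : Set (ℝ × ℝ) := {p : ℝ × ℝ | p.2 < p.1} with hT
  set f : ℝ → ℝ → ℝ := fun x y => T.indicator F (x, y) with hf
  have hTm : MeasurableSet T := measurableSet_lt measurable_snd measurable_fst
  have hFm : Measurable F := (((Real.measurable_log.comp
      (measurable_fst.sub measurable_snd)).mul measurable_const).exp.mul
      (hU.measurable.comp measurable_snd)).mul (hW.measurable.comp measurable_fst)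
  have hm : Measurable (Function.uncurry f) := by
    have : Function.uncurry f = T.indicator F := by
      funext p; simp [Function.uncurry, hf]
    rw [this]
    exact hFm.indicator hTm
  have sliceX : ∀ x : ℝ, (fun y => f x y)
      = (Set.Iio x).indicator (fun y => (x-y)^(ρ-1) * U y * W x) := by
    intro x; funext y
    by_cases h : y < x
    · simp only [hf, hT, hF, Set.indicator_apply, Set.mem_setOf_eq, Set.mem_Iio, h, if_true]
      rw [Real.rpow_def_of_pos (by linarith : (0:ℝ) < x - y)]
    · simp only [hf, hT, hF, Set.indicator_apply, Set.mem_setOf_eq, Set.mem_Iio, h, if_false]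
  have sliceY : ∀ y : ℝ, (fun x => f x y)
      = (Set.Ioi y).indicator (fun x => (x-y)^(ρ-1) * U y * W x) := by
    intro y; funext x
    by_cases h : y < x
    · simp only [hf, hT, hF, Set.indicator_apply, Set.mem_setOf_eq, Set.mem_Ioi, h, if_true]
      rw [Real.rpow_def_of_pos (by linarith : (0:ℝ) < x - y)]
    · simp only [hf, hT, hF, Set.indicator_apply, Set.mem_setOf_eq, Set.mem_Ioi, h, if_false]
  have hker : ∀ x : ℝ, IntervalIntegrable (fun y => (x-y)^(ρ-1) * U y * W x) volume (-1) x :=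
    fun x => ((ker_intble hρ0 x (-1)).mul_continuousOn hU.continuousOn).mul_const _
  have hIoo : ∀ x ∈ Set.Ioc (-1:ℝ) 1,
      IntegrableOn (fun y => (x-y)^(ρ-1) * U y * W x) (Set.Ioo (-1) x) volume := by
    intro x hx
    exact (intervalIntegrable_iff_integrableOn_Ioo_of_le hx.1.le).mp (hker x)
  have hsetX : ∀ x ∈ Set.Ioc (-1:ℝ) 1, Set.Ioc (-1:ℝ) 1 ∩ Set.Iio x = Set.Ioo (-1) x := by
    intro x hx
    ext z
    simp only [Set.mem_inter_iff, Set.mem_Iio, Set.mem_Ioc, Set.mem_Ioo]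
    constructor
    · rintro ⟨⟨h1, h2⟩, h3⟩; exact ⟨h1, h3⟩
    · rintro ⟨h1, h2⟩; exact ⟨⟨h1, by linarith [hx.2]⟩, h2⟩
  have hsetY : ∀ y ∈ Set.Ioc (-1:ℝ) 1, Set.Ioc (-1:ℝ) 1 ∩ Set.Ioi y = Set.Ioc y 1 := by
    intro y hy
    ext z
    simp only [Set.mem_inter_iff, Set.mem_Ioi, Set.mem_Ioc]
    constructor
    · rintro ⟨⟨h1, h2⟩, h3⟩; exact ⟨h3, h2⟩
    · rintro ⟨h1, h2⟩; exact ⟨⟨by linarith [hy.1], h2⟩, h1⟩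
  have hsliceInt : ∀ x ∈ Set.Ioc (-1:ℝ) 1, Integrable (fun y => f x y) μ := by
    intro x hx
    rw [sliceX x, hμ]
    rw [integrable_indicator_iff measurableSet_Iio]
    rw [IntegrableOn, Measure.restrict_restrict measurableSet_Iio,
      Set.inter_comm, hsetX x hx]
    exact hIoo x hx
  obtain ⟨Cu, hCu⟩ : ∃ C, ∀ t ∈ Set.Icc (-1:ℝ) 1, |U t| ≤ C :=
    (isCompact_Icc.exists_bound_of_continuousOn hU.continuousOn).imp
      (fun C hC t ht => by simpa using hC t ht)
  obtain ⟨Cw, hCw⟩ : ∃ C, ∀ t ∈ Set.Icc (-1:ℝ) 1, |W t| ≤ C :=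
    (isCompact_Icc.exists_bound_of_continuousOn hW.continuousOn).imp
      (fun C hC t ht => by simpa using hC t ht)
  have hCu0 : 0 ≤ Cu := le_trans (abs_nonneg _) (hCu 0 (by norm_num))
  have hCw0 : 0 ≤ Cw := le_trans (abs_nonneg _) (hCw 0 (by norm_num))
  set C : ℝ := 2^ρ / ρ * (Cu * Cw) with hC
  have hbound : ∀ x ∈ Set.Ioc (-1:ℝ) 1, (∫ y, ‖f x y‖ ∂μ) ≤ C := by
    intro x hx
    have heq : (∫ y, ‖f x y‖ ∂μ)
        = ∫ y in Set.Ioo (-1:ℝ) x, ‖(x-y)^(ρ-1) * U y * W x‖ := by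
      have h1 : (fun y => ‖f x y‖)
          = (Set.Iio x).indicator (fun y => ‖(x-y)^(ρ-1) * U y * W x‖) := by
        funext y
        rw [congrFun (sliceX x) y]
        exact norm_indicator_eq_indicator_norm _ _
      rw [h1, hμ, setIntegral_indicator measurableSet_Iio, hsetX x hx]
    rw [heq]
    have hle : ∫ y in Set.Ioo (-1:ℝ) x, ‖(x-y)^(ρ-1) * U y * W x‖
        ≤ ∫ y in Set.Ioo (-1:ℝ) x, (x-y)^(ρ-1) * (Cu * Cw) := by
      apply setIntegral_mono_on ((hIoo x hx).norm)
        ((intervalIntegrable_iff_integrableOn_Ioo_of_le hx.1.le).mp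
          ((ker_intble hρ0 x (-1)).mul_const (Cu * Cw)))
        measurableSet_Ioo
      intro y hy
      have hxy : (0:ℝ) < x - y := by linarith [hy.2]
      rw [norm_mul, norm_mul, Real.norm_eq_abs, Real.norm_eq_abs, Real.norm_eq_abs,
        abs_of_nonneg (Real.rpow_nonneg hxy.le _), mul_assoc]
      apply mul_le_mul_of_nonneg_left _ (Real.rpow_nonneg hxy.le _)
      have hyI : y ∈ Set.Icc (-1:ℝ) 1 := ⟨hy.1.le, by linarith [hy.2, hx.2]⟩
      have hxI : x ∈ Set.Icc (-1:ℝ) 1 := ⟨hx.1.le, hx.2⟩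
      exact mul_le_mul (hCu y hyI) (hCw x hxI) (abs_nonneg _) hCu0
    refine hle.trans ?_
    rw [MeasureTheory.integral_mul_const]
    have hkval : ∫ y in Set.Ioo (-1:ℝ) x, (x-y)^(ρ-1) = (x+1)^ρ / ρ := by
      rw [← integral_Ioc_eq_integral_Ioo, ← intervalIntegral.integral_of_le hx.1.le]
      exact ker_eval hρ0 hx.1.le
    rw [hkval, hC]
    have h2 : (x+1)^ρ ≤ (2:ℝ)^ρ :=
      Real.rpow_le_rpow (by linarith [hx.1]) (by linarith [hx.2]) hρ0.le
    have h3 : (x+1)^ρ / ρ ≤ (2:ℝ)^ρ / ρ := by gcongr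
    exact mul_le_mul_of_nonneg_right h3 (mul_nonneg hCu0 hCw0)
  -- integrability of the iterated norm integral
  have hnormInt : Integrable (fun x => ∫ y, ‖f x y‖ ∂μ) μ := by
    apply Integrable.mono' (integrable_const C)
    · exact (hm.norm.stronglyMeasurable.integral_prod_right').aestronglyMeasurable
    · rw [hμ]
      refine (ae_restrict_iff' measurableSet_Ioc).mpr (Filter.Eventually.of_forall ?_)
      intro x hx
      rw [Real.norm_eq_abs, abs_of_nonneg (integral_nonneg (fun y => norm_nonneg _))]
      exact hbound x hx
  have hslices : ∀ᵐ x ∂μ, Integrable (fun y => f x y) μ := by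
    rw [hμ]
    exact (ae_restrict_iff' measurableSet_Ioc).mpr (Filter.Eventually.of_forall hsliceInt)
  have hInt : Integrable (Function.uncurry f) (μ.prod μ) :=
    (integrable_prod_iff hm.aestronglyMeasurable).mpr ⟨hslices, hnormInt⟩
  have swap := integral_integral_swap hInt
  rw [intervalIntegral.integral_of_le (by norm_num : (-1:ℝ) ≤ 1),
    intervalIntegral.integral_of_le (by norm_num : (-1:ℝ) ≤ 1)]
  have hL : ∫ x in Set.Ioc (-1:ℝ) 1, (∫ y in (-1:ℝ)..x, (x-y)^(ρ-1) * U y) * W x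
      = ∫ x, (∫ y, f x y ∂μ) ∂μ := by
    rw [hμ]
    apply setIntegral_congr_fun measurableSet_Ioc
    intro x hx
    have : ∫ y, f x y ∂(volume.restrict (Set.Ioc (-1:ℝ) 1))
        = ∫ y in (-1:ℝ)..x, (x-y)^(ρ-1) * U y * W x := by
      rw [sliceX x, setIntegral_indicator measurableSet_Iio, hsetX x hx,
        ← integral_Ioc_eq_integral_Ioo, ← intervalIntegral.integral_of_le hx.1.le]
    dsimp only
    rw [this, intervalIntegral.integral_mul_const]
  have hR : ∫ y in Set.Ioc (-1:ℝ) 1, U y * (∫ x in y..1, (x-y)^(ρ-1) * W x)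
      = ∫ y, (∫ x, f x y ∂μ) ∂μ := by
    rw [hμ]
    apply setIntegral_congr_fun measurableSet_Ioc
    intro y hy
    have h1 : ∫ x, f x y ∂(volume.restrict (Set.Ioc (-1:ℝ) 1))
        = ∫ x in y..1, (x-y)^(ρ-1) * U y * W x := by
      rw [sliceY y, setIntegral_indicator measurableSet_Ioi, hsetY y hy,
        ← intervalIntegral.integral_of_le hy.2]
    dsimp only
    rw [h1, show (∫ x in y..1, (x-y)^(ρ-1) * U y * W x)
        = U y * ∫ x in y..1, (x-y)^(ρ-1) * W x from by
      rw [← intervalIntegral.integral_const_mul]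
      apply intervalIntegral.integral_congr
      intro x _
      ring]
  rw [hL, hR]
  exact swap

/-- Jacobi polynomial with real parameters. -/
noncomputable def jacobiP (a b : ℝ) (n : ℕ) (x : ℝ) : ℝ :=
  ∑ j ∈ Finset.range (n + 1),
    ((ascPochhammer ℝ j).eval ((n : ℝ) + a + b + 1) / (Nat.factorial j : ℝ)) *
      ((ascPochhammer ℝ (n - j)).eval (a + (j : ℝ) + 1) / (Nat.factorial (n - j) : ℝ)) *
      ((x - 1) / 2) ^ j

/-- Right Riemann-Liouville fractional integral on (-1,1). -/
noncomputable def Iplus (ρ : ℝ) (v : ℝ → ℝ) (x : ℝ) : ℝ :=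
  (1 / Real.Gamma ρ) * ∫ y in x..1, (y - x) ^ (ρ - 1) * v y

/-- Left Riemann-Liouville fractional integral on (-1,1). -/
noncomputable def Iminus (ρ : ℝ) (v : ℝ → ℝ) (x : ℝ) : ℝ :=
  (1 / Real.Gamma ρ) * ∫ y in (-1 : ℝ)..x, (x - y) ^ (ρ - 1) * v y

/-- Right Riemann-Liouville fractional derivative of order `s ∈ [k-1,k)`. -/
noncomputable def Dplus (s : ℝ) (k : ℕ) (v : ℝ → ℝ) (x : ℝ) : ℝ :=
  (-1 : ℝ) ^ k * iteratedDeriv k (Iplus ((k : ℝ) - s) v) x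

/-- Left Riemann-Liouville fractional derivative of order `s ∈ [k-1,k)`. -/
noncomputable def Dminus (s : ℝ) (k : ℕ) (v : ℝ → ℝ) (x : ℝ) : ℝ :=
  iteratedDeriv k (Iminus ((k : ℝ) - s) v) x

/-- Right Caputo fractional derivative of order `s ∈ [k-1,k)`, with derivatives of `v`
taken within `[-1,1]`. -/
noncomputable def CDplusW (s : ℝ) (k : ℕ) (v : ℝ → ℝ) (x : ℝ) : ℝ :=
  ((-1 : ℝ) ^ k / Real.Gamma ((k : ℝ) - s)) *
    ∫ y in x..1, (y - x) ^ ((k : ℝ) - s - 1) *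
      iteratedDerivWithin k v (Set.Icc (-1) 1) y

/-- Lemma 2.3, first identity: fractional integration by parts. -/
theorem stmt1 (k : ℕ) (hk : 1 ≤ k) (s : ℝ) (hs1 : (k : ℝ) - 1 < s) (hs2 : s < k)
    (u v : ℝ → ℝ)
    (hu : ContDiffOn ℝ k u (Set.Icc (-1) 1))
    (hv : ContDiffOn ℝ k v (Set.Icc (-1) 1))
    (hIu : ContDiffOn ℝ k (Iminus ((k : ℝ) - s) u) (Set.Icc (-1) 1)) :
    ∫ x in (-1 : ℝ)..1, Dminus s k u x * v x =
      (∫ x in (-1 : ℝ)..1, u x * CDplusW s k v x) +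
        ∑ j ∈ Finset.range k, (-1 : ℝ) ^ j *
          (iteratedDerivWithin j v (Set.Icc (-1) 1) 1 *
              iteratedDerivWithin (k - j - 1) (Iminus ((k : ℝ) - s) u) (Set.Icc (-1) 1) 1 -
            iteratedDerivWithin j v (Set.Icc (-1) 1) (-1) *
              iteratedDerivWithin (k - j - 1) (Iminus ((k : ℝ) - s) u) (Set.Icc (-1) 1) (-1)) := by
  
  have hUD : UniqueDiffOn ℝ (Set.Icc (-1:ℝ) 1) := uniqueDiffOn_Icc (by norm_num)
  have hρ0 : (0:ℝ) < (k:ℝ) - s := by linarith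
  set S : Set ℝ := Set.Icc (-1:ℝ) 1 with hS
  set g : ℝ → ℝ := Iminus ((k:ℝ) - s) u with hg
  -- Step A : rewrite LHS with within-derivatives
  have hA : ∫ x in (-1:ℝ)..1, Dminus s k u x * v x
      = ∫ x in (-1:ℝ)..1, iteratedDerivWithin k g S x * v x := by
    rw [intervalIntegral.integral_of_le (by norm_num : (-1:ℝ) ≤ 1),
      intervalIntegral.integral_of_le (by norm_num : (-1:ℝ) ≤ 1),
      integral_Ioc_eq_integral_Ioo, integral_Ioc_eq_integral_Ioo]
    apply setIntegral_congr_fun measurableSet_Ioo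
    intro x hx
    dsimp only
    rw [show Dminus s k u x = iteratedDeriv k g x from rfl, itDeriv_interior g k hx]
  -- Step B : iterated integration by parts
  have hB := ibp k g hIu v hv
  -- Step C : Fubini
  have hUc : Continuous (extIcc u) := extIcc_cont hu.continuousOn
  have hWc : Continuous (extIcc (iteratedDerivWithin k v S)) :=
    extIcc_cont (hv.continuousOn_iteratedDerivWithin le_rfl hUD)
  have hc1 : ∫ x in (-1:ℝ)..1, g x * iteratedDerivWithin k v S x
      = (1 / Real.Gamma ((k:ℝ) - s)) *
          ∫ x in (-1:ℝ)..1, (∫ y in (-1:ℝ)..x, (x-y)^((k:ℝ) - s - 1) * extIcc u y) *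
            extIcc (iteratedDerivWithin k v S) x := by
    rw [← intervalIntegral.integral_const_mul]
    apply intervalIntegral.integral_congr
    intro x hx
    rw [uIcc_eq] at hx
    have hgx : g x = (1 / Real.Gamma ((k:ℝ) - s)) *
        ∫ y in (-1:ℝ)..x, (x-y)^((k:ℝ) - s - 1) * extIcc u y := by
      rw [hg]
      simp only [Iminus]
      congr 1
      apply intervalIntegral.integral_congr
      intro y hy
      rw [Set.uIcc_of_le hx.1] at hy
      have hyS : y ∈ S := ⟨hy.1, le_trans hy.2 hx.2⟩
      dsimp only
      rw [extIcc_eq hyS]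
    dsimp only
    rw [hgx, extIcc_eq hx]
    ring
  have hc2 := fub hρ0 (extIcc u) (extIcc (iteratedDerivWithin k v S)) hUc hWc
  have hc3 : ∫ x in (-1:ℝ)..1, u x * CDplusW s k v x
      = ((-1:ℝ)^k / Real.Gamma ((k:ℝ) - s)) *
          ∫ y in (-1:ℝ)..1, extIcc u y *
            ∫ x in y..1, (x-y)^((k:ℝ) - s - 1) * extIcc (iteratedDerivWithin k v S) x := by
    rw [← intervalIntegral.integral_const_mul]
    apply intervalIntegral.integral_congr
    intro y hy
    rw [uIcc_eq] at hy
    have hinner : ∫ x in y..1, (x-y)^((k:ℝ) - s - 1) * iteratedDerivWithin k v S x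
        = ∫ x in y..1, (x-y)^((k:ℝ) - s - 1) * extIcc (iteratedDerivWithin k v S) x := by
      apply intervalIntegral.integral_congr
      intro x hxx
      rw [Set.uIcc_of_le hy.2] at hxx
      have hxS : x ∈ S := ⟨le_trans hy.1 hxx.1, hxx.2⟩
      dsimp only
      rw [extIcc_eq hxS]
    dsimp only
    simp only [CDplusW]
    rw [hinner, extIcc_eq hy]
    ring
  rw [hA, hB, hc3, hc1, hc2]
  ring
end

section
/- Let ρ > 0, α > −1, β ∈ ℝ, and n ∈ ℕ. Then for every x ∈ (−1, 1), I_+^ρ[ (1−·)^α P_n^{(α,β)} ](x) = [Γ(n+α+1)/Γ(n+α+ρ+1)] · (1−x)^{α+ρ} · P_n^{(α+ρ, β−ρ)}(x). -/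
open MeasureTheory Filter Finset

lemma betaCpowEq {t : ℝ} (ht : t ∈ Set.Icc (0:ℝ) 1) (a b : ℝ) :
    (t:ℂ) ^ ((a:ℂ) - 1) * (1 - (t:ℂ)) ^ ((b:ℂ) - 1)
      = ((t ^ (a-1) * (1-t) ^ (b-1) : ℝ) : ℂ) := by
  rw [Complex.ofReal_mul, Complex.ofReal_cpow ht.1, Complex.ofReal_cpow (by linarith [ht.2])]
  push_cast
  ring

lemma realBetaIntegrable {a b : ℝ} (ha : 0 < a) (hb : 0 < b) :
    IntervalIntegrable (fun t : ℝ => t ^ (a-1) * (1-t) ^ (b-1)) volume 0 1 := by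
  have h := Complex.betaIntegral_convergent (u := a) (v := b) (by simpa) (by simpa)
  have h2 : IntervalIntegrable
      (fun t : ℝ => ((t ^ (a-1) * (1-t) ^ (b-1) : ℝ) : ℂ)) volume 0 1 := by
    apply h.congr
    intro t ht
    rw [Set.uIoc_of_le zero_le_one] at ht
    exact betaCpowEq ⟨ht.1.le, ht.2⟩ a b
  rw [intervalIntegrable_iff] at h2 ⊢
  simpa [IntegrableOn] using h2.re

lemma realBeta {a b : ℝ} (ha : 0 < a) (hb : 0 < b) :
    ∫ t in (0:ℝ)..1, t ^ (a-1) * (1-t) ^ (b-1)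
      = Real.Gamma a * Real.Gamma b / Real.Gamma (a+b) := by
  have h := Complex.Gamma_mul_Gamma_eq_betaIntegral (s := a) (t := b) (by simpa) (by simpa)
  have hbeta : Complex.betaIntegral a b
      = ((∫ t in (0:ℝ)..1, t ^ (a-1) * (1-t) ^ (b-1) : ℝ) : ℂ) := by
    rw [Complex.betaIntegral, ← intervalIntegral.integral_ofReal]
    refine intervalIntegral.integral_congr fun t ht => betaCpowEq ?_ a b
    rwa [Set.uIcc_of_le zero_le_one] at ht
  rw [hbeta] at h
  have hG : Real.Gamma (a+b) ≠ 0 := (Real.Gamma_pos_of_pos (by linarith)).ne'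
  have h3 := congrArg Complex.re h
  rw [← Complex.ofReal_add, Complex.Gamma_ofReal, Complex.Gamma_ofReal, Complex.Gamma_ofReal,
    ← Complex.ofReal_mul, ← Complex.ofReal_mul, Complex.ofReal_re, Complex.ofReal_re] at h3
  field_simp
  linarith [h3]

lemma pochGamma {a : ℝ} (ha : 0 < a) (m : ℕ) :
    Real.Gamma (a + m) = (ascPochhammer ℝ m).eval a * Real.Gamma a := by
  induction m with
  | zero => simp
  | succ k ih =>
      have hk : a + (k:ℝ) ≠ 0 := by positivity
      rw [Nat.cast_succ, ← add_assoc, Real.Gamma_add_one hk, ih, ascPochhammer_succ_right]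
      simp only [Polynomial.eval_mul, Polynomial.eval_add, Polynomial.eval_X,
        Polynomial.eval_natCast]
      ring

lemma rpow_mul_pow_nonneg {s : ℝ} (hs : 0 ≤ s) {α : ℝ} (hα : -1 < α) (j : ℕ) :
    s ^ α * s ^ j = s ^ (α + (j:ℝ)) := by
  rcases hs.eq_or_lt with h0 | hpos
  · cases j with
    | zero => simp
    | succ k =>
        have hne : α + ((k+1 : ℕ):ℝ) ≠ 0 := by push_cast; nlinarith [Nat.cast_nonneg (α := ℝ) k]
        rw [← h0, Real.zero_rpow hne, pow_succ, mul_zero, mul_zero]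
  · rw [← Real.rpow_natCast s j, ← Real.rpow_add hpos]

/-- Lemma 2.5, right integral / Bateman formula. -/
theorem stmt2 (ρ α β : ℝ) (hρ : 0 < ρ) (hα : -1 < α) (n : ℕ) :
    ∀ x ∈ Set.Ioo (-1 : ℝ) 1,
      Iplus ρ (fun y => (1 - y) ^ α * jacobiP α β n y) x =
        Real.Gamma ((n : ℝ) + α + 1) / Real.Gamma ((n : ℝ) + α + ρ + 1) *
          ((1 - x) ^ (α + ρ) * jacobiP (α + ρ) (β - ρ) n x) := by
  intro x hx
  obtain ⟨hx1, hx2⟩ := hx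
  have hu : (0:ℝ) < 1 - x := by linarith
  rw [Iplus]
  -- substitution y = (1-x) t + x
  have hsub := intervalIntegral.smul_integral_comp_mul_add (a := (0:ℝ)) (b := 1)
    (fun y => (y - x) ^ (ρ - 1) * ((1 - y) ^ α * jacobiP α β n y)) (1-x) x
  simp only [mul_zero, zero_add, mul_one, sub_add_cancel] at hsub
  rw [← hsub]
  -- rewrite integrand as a finite sum of beta-type integrands
  have hcong : ∀ t ∈ Set.uIcc (0:ℝ) 1,
      ((1-x)*t + x - x) ^ (ρ - 1) *
        ((1 - ((1-x)*t + x)) ^ α * jacobiP α β n ((1-x)*t + x))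
      = ∑ j ∈ Finset.range (n + 1),
          (((ascPochhammer ℝ j).eval ((n : ℝ) + α + β + 1) / (Nat.factorial j : ℝ)) *
            ((ascPochhammer ℝ (n - j)).eval (α + (j : ℝ) + 1) / (Nat.factorial (n - j) : ℝ)) *
            ((x - 1) / 2) ^ j * ((1-x) ^ (ρ-1) * (1-x) ^ α)) *
          (t ^ (ρ-1) * (1-t) ^ ((α + (j:ℝ) + 1) - 1)) := by
    intro t ht
    rw [Set.uIcc_of_le zero_le_one] at ht
    have e1 : (1-x)*t + x - x = (1-x)*t := by ring
    have e2 : 1 - ((1-x)*t + x) = (1-x)*(1-t) := by ring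
    rw [e1, e2, jacobiP, Real.mul_rpow hu.le ht.1, Real.mul_rpow hu.le (by linarith [ht.2]),
      Finset.mul_sum, Finset.mul_sum]
    refine Finset.sum_congr rfl fun j hj => ?_
    have e3 : ((1-x)*t + x - 1)/2 = ((x-1)/2) * (1-t) := by ring
    rw [e3, mul_pow, show (α + (j:ℝ) + 1) - 1 = α + (j:ℝ) by ring,
      ← rpow_mul_pow_nonneg (by linarith [ht.2]) hα j]
    ring
  rw [intervalIntegral.integral_congr hcong]
  have hb : ∀ j : ℕ, (0:ℝ) < α + (j:ℝ) + 1 := fun j => by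
    have := Nat.cast_nonneg (α := ℝ) j; linarith
  rw [intervalIntegral.integral_finset_sum (fun j _ =>
    (realBetaIntegrable hρ (hb j)).const_mul _)]
  -- evaluate each beta integral
  have heval : ∀ j ∈ Finset.range (n+1),
      (∫ t in (0:ℝ)..1,
        (((ascPochhammer ℝ j).eval ((n : ℝ) + α + β + 1) / (Nat.factorial j : ℝ)) *
          ((ascPochhammer ℝ (n - j)).eval (α + (j : ℝ) + 1) / (Nat.factorial (n - j) : ℝ)) *
          ((x - 1) / 2) ^ j * ((1-x) ^ (ρ-1) * (1-x) ^ α)) *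
        (t ^ (ρ-1) * (1-t) ^ ((α + (j:ℝ) + 1) - 1)))
      = (((ascPochhammer ℝ j).eval ((n : ℝ) + α + β + 1) / (Nat.factorial j : ℝ)) *
          ((ascPochhammer ℝ (n - j)).eval (α + (j : ℝ) + 1) / (Nat.factorial (n - j) : ℝ)) *
          ((x - 1) / 2) ^ j * ((1-x) ^ (ρ-1) * (1-x) ^ α)) *
        (Real.Gamma ρ * Real.Gamma (α + (j:ℝ) + 1) / Real.Gamma (ρ + (α + (j:ℝ) + 1))) := by
    intro j _
    rw [intervalIntegral.integral_const_mul, realBeta hρ (hb j)]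
  rw [Finset.sum_congr rfl heval]
  -- power identity
  have hpow : (1-x) ^ (α + ρ) = (1-x) * ((1-x) ^ (ρ-1) * (1-x) ^ α) := by
    rw [show α + ρ = 1 + ((ρ-1) + α) by ring, Real.rpow_add hu, Real.rpow_add hu, Real.rpow_one]
  -- now pure algebra
  rw [jacobiP, smul_eq_mul]
  simp only [Finset.mul_sum]
  refine Finset.sum_congr rfl fun j hj => ?_
  have hj' : j ≤ n := Nat.lt_succ_iff.mp (Finset.mem_range.mp hj)
  have hc : ((n - j : ℕ) : ℝ) = (n : ℝ) - (j : ℝ) := by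
    rw [Nat.cast_sub hj']
  have e1 := pochGamma (a := α + (j:ℝ) + 1) (by linarith [hb j]) (n - j)
  have e2 := pochGamma (a := α + ρ + (j:ℝ) + 1) (by linarith [hb j]) (n - j)
  rw [hc, show α + (j:ℝ) + 1 + ((n:ℝ) - (j:ℝ)) = (n:ℝ) + α + 1 by ring] at e1
  rw [hc, show α + ρ + (j:ℝ) + 1 + ((n:ℝ) - (j:ℝ)) = (n:ℝ) + α + ρ + 1 by ring] at e2
  have hG1 : Real.Gamma (α + (j:ℝ) + 1) ≠ 0 := (Real.Gamma_pos_of_pos (hb j)).ne'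
  have hG3 : Real.Gamma (α + ρ + (j:ℝ) + 1) ≠ 0 :=
    (Real.Gamma_pos_of_pos (by linarith [hb j])).ne'
  have hG4 : Real.Gamma ((n:ℝ) + α + ρ + 1) ≠ 0 :=
    (Real.Gamma_pos_of_pos (by have := Nat.cast_nonneg (α := ℝ) n; linarith)).ne'
  have hG5 : Real.Gamma ((n:ℝ) + α + 1) ≠ 0 :=
    (Real.Gamma_pos_of_pos (by have := Nat.cast_nonneg (α := ℝ) n; linarith)).ne'
  have hΓρ : Real.Gamma ρ ≠ 0 := (Real.Gamma_pos_of_pos hρ).ne'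
  have hf1 : (Nat.factorial j : ℝ) ≠ 0 := Nat.cast_ne_zero.mpr (Nat.factorial_ne_zero j)
  have hf2 : (Nat.factorial (n-j) : ℝ) ≠ 0 := Nat.cast_ne_zero.mpr (Nat.factorial_ne_zero (n-j))
  have hQ : Polynomial.eval (α + (j:ℝ) + 1) (ascPochhammer ℝ (n-j))
      = Real.Gamma ((n:ℝ)+α+1) / Real.Gamma (α+(j:ℝ)+1) := by
    rw [eq_div_iff hG1]; linarith [e1]
  have hQ' : Polynomial.eval (α + ρ + (j:ℝ) + 1) (ascPochhammer ℝ (n-j))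
      = Real.Gamma ((n:ℝ)+α+ρ+1) / Real.Gamma (α+ρ+(j:ℝ)+1) := by
    rw [eq_div_iff hG3]; linarith [e2]
  rw [hQ, hQ', hpow, show ((n:ℝ) + (α+ρ) + (β-ρ) + 1) = (n:ℝ)+α+β+1 by ring,
    show ρ + (α+(j:ℝ)+1) = α+ρ+(j:ℝ)+1 by ring]
  field_simp
end

section
/- Let ρ > 0, α ∈ ℝ, β > −1, and n ∈ ℕ. Then for every x ∈ (−1, 1), I_−^ρ[ (1+·)^β P_n^{(α,β)} ](x) = [Γ(n+β+1)/Γ(n+β+ρ+1)] · (1+x)^{β+ρ} · P_n^{(α−ρ, β+ρ)}(x). -/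
open MeasureTheory Filter Finset

section BatemanAux

open intervalIntegral

noncomputable def ap (k : ℕ) (x : ℝ) : ℝ := (ascPochhammer ℝ k).eval x

lemma ap_zero (x : ℝ) : ap 0 x = 1 := by simp [ap]

lemma ap_succ_right (k : ℕ) (x : ℝ) : ap (k+1) x = ap k x * (x + k) :=
  ascPochhammer_succ_eval k x

lemma ap_succ_left (k : ℕ) (x : ℝ) : ap (k+1) x = x * ap k (x + 1) := by
  rw [ap, ascPochhammer_succ_left, Polynomial.eval_mul, Polynomial.eval_comp]
  simp [ap]

lemma ap_add (k l : ℕ) (x : ℝ) : ap (k + l) x = ap k x * ap l (x + k) := by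
  rw [ap, ← ascPochhammer_mul, Polynomial.eval_mul, Polynomial.eval_comp]
  simp [ap]

lemma ap_neg (m : ℕ) (x : ℝ) : ap m x = (-1)^m * ap m (-(x + m - 1)) := by
  induction m generalizing x with
  | zero => simp [ap_zero]
  | succ m ih =>
      rw [ap_succ_right, ih, ap_succ_left]
      push_cast
      ring_nf

/-- Key Vandermonde-type identity. -/
lemma keyS (m : ℕ) : ∀ c d : ℝ,
    ∑ l ∈ range (m+1), (-1:ℝ)^l * (m.choose l) * ap l c * ap (m-l) (d + l) = ap m (d - c) := by
  induction m with
  | zero => intro c d; simp [ap_zero]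
  | succ m ih =>
      intro c d
      rw [Finset.sum_range_succ' _ (m+1)]
      have split : ∀ k ∈ range (m+1),
          (-1:ℝ)^(k+1) * ((m+1).choose (k+1)) * ap (k+1) c * ap (m+1-(k+1)) (d + ↑(k+1))
          = ((-1:ℝ)^(k+1) * (m.choose (k+1)) * ap (k+1) c * ap (m-k) (d + ↑(k+1)))
            + ((-1:ℝ)^(k+1) * (m.choose k) * ap (k+1) c * ap (m-k) (d + ↑(k+1))) := by
        intro k hk
        have h1 : m + 1 - (k+1) = m - k := by omega
        rw [Nat.choose_succ_succ, h1]
        push_cast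
        ring
      rw [Finset.sum_congr rfl split, Finset.sum_add_distrib]
      have hB : ∑ k ∈ range (m+1),
          (-1:ℝ)^(k+1) * (m.choose (k+1)) * ap (k+1) c * ap (m-k) (d + ↑(k+1))
          + (-1:ℝ)^0 * ((m+1).choose 0) * ap 0 c * ap (m+1-0) (d + (0:ℕ))
          = (d + m) * ap m (d - c) := by
        have hlast : ((-1:ℝ)^(m+1) * (m.choose (m+1)) * ap (m+1) c * ap (m-m) (d + ↑(m+1))) = 0 := by
          simp [Nat.choose_succ_self]
        rw [Finset.sum_range_succ, hlast, add_zero]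
        have : ∑ k ∈ range m, (-1:ℝ)^(k+1) * (m.choose (k+1)) * ap (k+1) c * ap (m-k) (d + ↑(k+1))
            + (-1:ℝ)^0 * ((m+1).choose 0) * ap 0 c * ap (m+1-0) (d + (0:ℕ))
            = ∑ l ∈ range (m+1), (-1:ℝ)^l * (m.choose l) * ap l c * ap (m+1-l) (d + l) := by
          rw [Finset.sum_range_succ' (fun l => (-1:ℝ)^l * (m.choose l) * ap l c * ap (m+1-l) (d + l)) m]
          congr 1
          · exact Finset.sum_congr rfl fun k hk => by
              have h1 : m + 1 - (k+1) = m - k := by omega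
              rw [h1]
          · norm_num
        rw [this]
        have step : ∀ l ∈ range (m+1),
            (-1:ℝ)^l * (m.choose l) * ap l c * ap (m+1-l) (d + l)
            = (d + m) * ((-1:ℝ)^l * (m.choose l) * ap l c * ap (m-l) (d + l)) := by
          intro l hl
          have hl' : l ≤ m := by simpa [Nat.lt_succ_iff] using hl
          have h1 : m + 1 - l = (m - l) + 1 := by omega
          rw [h1, ap_succ_right]
          have h2 : ((m - l : ℕ) : ℝ) = (m : ℝ) - l := by
            rw [Nat.cast_sub hl']
          rw [h2]
          ring
        rw [Finset.sum_congr rfl step, ← Finset.mul_sum, ih]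
      have hA : ∑ k ∈ range (m+1),
          (-1:ℝ)^(k+1) * (m.choose k) * ap (k+1) c * ap (m-k) (d + ↑(k+1))
          = -c * ap m (d - c) := by
        have step : ∀ k ∈ range (m+1),
            (-1:ℝ)^(k+1) * (m.choose k) * ap (k+1) c * ap (m-k) (d + ↑(k+1))
            = -c * ((-1:ℝ)^k * (m.choose k) * ap k (c+1) * ap (m-k) ((d+1) + k)) := by
          intro k hk
          rw [ap_succ_left]
          push_cast
          ring_nf
        rw [Finset.sum_congr rfl step, ← Finset.mul_sum, ih]
        have : d + 1 - (c + 1) = d - c := by ring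
        rw [this]
      rw [add_right_comm, hB, hA, ap_succ_right]
      push_cast
      ring

lemma coefId (a b : ℝ) (n k : ℕ) (hk : k ≤ n) :
    ∑ j ∈ range (n+1),
      (ap j ((n:ℝ)+a+b+1) / j.factorial) * (ap (n-j) (b+j+1) / (n-j).factorial)
        * (-1:ℝ)^(n-j) * (j.choose k)
    = (ap k ((n:ℝ)+a+b+1) / k.factorial) * (ap (n-k) (a+k+1) / (n-k).factorial) := by
  set T : ℝ := (n:ℝ)+a+b+1 with hT
  set m : ℕ := n - k with hm
  -- restrict sum to Ico k (n+1)
  have hzero : ∀ j ∈ range (n+1), j ∉ Ico k (n+1) →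
      (ap j T / j.factorial) * (ap (n-j) (b+j+1) / (n-j).factorial)
        * (-1:ℝ)^(n-j) * (j.choose k) = 0 := by
    intro j hj hj'
    have hjk : j < k := by
      simp only [mem_range] at hj
      simp only [mem_Ico, not_and, not_lt] at hj'
      omega
    rw [Nat.choose_eq_zero_of_lt hjk]
    simp
  have hsub : ∑ j ∈ range (n+1),
      (ap j T / j.factorial) * (ap (n-j) (b+j+1) / (n-j).factorial)
        * (-1:ℝ)^(n-j) * (j.choose k)
      = ∑ j ∈ Ico k (n+1),
      (ap j T / j.factorial) * (ap (n-j) (b+j+1) / (n-j).factorial)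
        * (-1:ℝ)^(n-j) * (j.choose k) := by
    refine (Finset.sum_subset ?_ ?_).symm
    · intro j hj; simp only [mem_Ico] at hj; simp only [mem_range]; omega
    · exact hzero
  rw [hsub, Finset.sum_Ico_eq_sum_range]
  have hrange : n + 1 - k = m + 1 := by omega
  rw [hrange]
  have hterm : ∀ l ∈ range (m+1),
      (ap (k+l) T / (k+l).factorial) * (ap (n-(k+l)) (b + ((k+l : ℕ) : ℝ) + 1) / (n-(k+l)).factorial)
        * (-1:ℝ)^(n-(k+l)) * ((k+l).choose k)
      = (ap k T / k.factorial) * ((-1:ℝ)^m / m.factorial) *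
          ((-1:ℝ)^l * (m.choose l) * ap l (T+k) * ap (m-l) ((b+k+1) + l)) := by
    intro l hl
    have hlm : l ≤ m := by simpa [Nat.lt_succ_iff] using hl
    have h1 : n - (k+l) = m - l := by omega
    have h2 : ((k+l : ℕ) : ℝ) = (k:ℝ) + l := by push_cast; ring
    rw [h1, h2, ap_add]
    have hb : b + ((k:ℝ) + (l:ℝ)) + 1 = (b + k + 1) + l := by ring
    rw [hb]
    -- factorial / choose identities
    have hfac : ((k+l).factorial : ℝ) = ((k+l).choose k : ℝ) * k.factorial * l.factorial := by
      have := Nat.choose_mul_factorial_mul_factorial (show k ≤ k + l by omega) (n := k + l)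
      rw [Nat.add_sub_cancel_left] at this
      exact_mod_cast this.symm
    have hfacm : (m.factorial : ℝ) = (m.choose l : ℝ) * l.factorial * (m-l).factorial := by
      exact_mod_cast (Nat.choose_mul_factorial_mul_factorial hlm).symm
    have hsign : (-1:ℝ)^(m-l) * (-1:ℝ)^l = (-1:ℝ)^m := by
      rw [← pow_add, Nat.sub_add_cancel hlm]
    have hchoosene : ((k+l).choose k : ℝ) ≠ 0 := by
      exact_mod_cast Nat.choose_pos (show k ≤ k + l by omega) |>.ne'
    have hchoosene2 : ((m).choose l : ℝ) ≠ 0 := by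
      exact_mod_cast (Nat.choose_pos hlm).ne'
    have f1 : (k.factorial : ℝ) ≠ 0 := by exact_mod_cast k.factorial_ne_zero
    have f2 : (l.factorial : ℝ) ≠ 0 := by exact_mod_cast l.factorial_ne_zero
    have f3 : ((m-l).factorial : ℝ) ≠ 0 := by exact_mod_cast (m-l).factorial_ne_zero
    have hsq : (-1:ℝ)^l * (-1:ℝ)^l = 1 := by
      rw [← pow_add, ← two_mul, pow_mul]; norm_num
    have hsign' : (-1:ℝ)^(m-l) = (-1:ℝ)^m * (-1:ℝ)^l := by
      rw [← hsign, mul_assoc, hsq, mul_one]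
    rw [hfac, hfacm, hsign']
    field_simp
  rw [Finset.sum_congr rfl hterm, ← Finset.mul_sum, keyS m (T+k) (b+k+1)]
  have harg : b + (k:ℝ) + 1 - (T + k) = -((n:ℝ) + a) := by rw [hT]; ring
  rw [harg]
  have hneg := ap_neg m (a + k + 1)
  have harg2 : -((a + (k:ℝ) + 1) + (m:ℝ) - 1) = -((n:ℝ)+a) := by
    have : ((m:ℕ):ℝ) = (n:ℝ) - k := by rw [hm, Nat.cast_sub hk]
    rw [this]; ring
  rw [harg2] at hneg
  rw [hm] at hneg ⊢
  rw [hneg]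
  have hs : (-1:ℝ)^(n-k) * ((-1:ℝ)^(n-k) * ap (n-k) (-((n:ℝ)+a))) = ap (n-k) (-((n:ℝ)+a)) := by
    rw [← mul_assoc, ← pow_add, Even.neg_one_pow ⟨n-k, rfl⟩, one_mul]
  rw [← hs]
  ring

/-- Expansion of the Jacobi polynomial in powers of (x+1)/2. -/
lemma jacobiC (a b : ℝ) (n : ℕ) (x : ℝ) :
    jacobiP a b n x = ∑ j ∈ range (n+1),
      (ap j ((n:ℝ)+a+b+1) / j.factorial) * (ap (n-j) (b+j+1) / (n-j).factorial)
        * (-1:ℝ)^(n-j) * ((x+1)/2)^j := by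
  have hxp : ∀ j : ℕ, ((x+1)/2)^j = ∑ k ∈ range (j+1), ((x-1)/2)^k * (j.choose k) := by
    intro j
    have h : (x+1)/2 = (x-1)/2 + 1 := by ring
    rw [h, add_pow]
    simp
  have expand : ∀ j ∈ range (n+1),
      (ap j ((n:ℝ)+a+b+1) / j.factorial) * (ap (n-j) (b+j+1) / (n-j).factorial)
        * (-1:ℝ)^(n-j) * ((x+1)/2)^j
      = ∑ k ∈ range (n+1),
          (ap j ((n:ℝ)+a+b+1) / j.factorial) * (ap (n-j) (b+j+1) / (n-j).factorial)
            * (-1:ℝ)^(n-j) * (j.choose k) * ((x-1)/2)^k := by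
    intro j hj
    have hj' : j + 1 ≤ n + 1 := by simp only [mem_range] at hj; omega
    have hext : ∑ k ∈ range (j+1), ((x-1)/2)^k * (j.choose k)
        = ∑ k ∈ range (n+1), ((x-1)/2)^k * (j.choose k) := by
      refine Finset.sum_subset (Finset.range_subset_range.mpr hj') ?_
      intro k hk hk'
      have : j < k := by simp only [mem_range] at hk hk' ⊢; omega
      rw [Nat.choose_eq_zero_of_lt this]
      simp
    rw [hxp j, hext, Finset.mul_sum]
    exact Finset.sum_congr rfl fun k hk => by ring
  rw [Finset.sum_congr rfl expand, Finset.sum_comm]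
  unfold jacobiP
  refine Finset.sum_congr rfl fun k hk => ?_
  have hk' : k ≤ n := by simp only [mem_range] at hk; omega
  rw [← Finset.sum_mul, coefId a b n k hk']
  rfl

lemma gamma_ap {x : ℝ} (hx : 0 < x) (k : ℕ) : Real.Gamma (x + k) = ap k x * Real.Gamma x := by
  induction k with
  | zero => simp [ap]
  | succ k ih =>
      have hxk : x + (k:ℝ) ≠ 0 := by positivity
      have : x + ((k:ℕ)+1 : ℕ) = (x + k) + 1 := by push_cast; ring
      rw [this, Real.Gamma_add_one hxk, ih, ap_succ_right]
      ring

/-- Real Beta integral. -/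
lemma betaReal {p q : ℝ} (hp : 0 < p) (hq : 0 < q) :
    ∫ t in (0:ℝ)..1, t^(p-1) * (1-t)^(q-1) = Real.Gamma p * Real.Gamma q / Real.Gamma (p+q) := by
  have h := Complex.Gamma_mul_Gamma_eq_betaIntegral
    (s := (p:ℂ)) (t := (q:ℂ)) (by simpa using hp) (by simpa using hq)
  have hbeta : Complex.betaIntegral (p:ℂ) (q:ℂ)
      = ((∫ t in (0:ℝ)..1, t^(p-1) * (1-t)^(q-1) : ℝ) : ℂ) := by
    rw [Complex.betaIntegral]
    rw [← intervalIntegral.integral_ofReal]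
    refine intervalIntegral.integral_congr fun t ht => ?_
    rw [Set.uIcc_of_le (by norm_num : (0:ℝ) ≤ 1)] at ht
    obtain ⟨ht0, ht1⟩ := ht
    push_cast
    rw [Complex.ofReal_cpow ht0, Complex.ofReal_cpow (by linarith)]
    push_cast
    ring
  rw [hbeta] at h
  have hne : Real.Gamma (p+q) ≠ 0 := (Real.Gamma_pos_of_pos (by linarith)).ne'
  have h2 : (Real.Gamma p * Real.Gamma q : ℝ) = Real.Gamma (p+q) * ∫ t in (0:ℝ)..1, t^(p-1) * (1-t)^(q-1) := by
    have := h
    rw [← Complex.ofReal_add, Complex.Gamma_ofReal, Complex.Gamma_ofReal, Complex.Gamma_ofReal] at this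
    exact_mod_cast this
  field_simp [hne] at h2 ⊢
  linarith [h2]

lemma keyIntegrable {γ ρ x : ℝ} (hγ : -1 < γ) (hρ : 0 < ρ) (hx : -1 < x) :
    IntervalIntegrable (fun y => (x-y)^(ρ-1) * (1+y)^γ) volume (-1) x := by
  set m : ℝ := (-1+x)/2 with hm
  have hm1 : -1 < m := by rw [hm]; linarith
  have hm2 : m < x := by rw [hm]; linarith
  -- part 1 : on [-1, m]
  have base1 : IntervalIntegrable (fun u : ℝ => u^γ) volume 0 (1+m) :=
    intervalIntegrable_rpow' hγ
  have int1 : IntervalIntegrable (fun y : ℝ => (1+y)^γ) volume (-1) m := by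
    have := base1.comp_add_right 1
    have he : (fun y : ℝ => (y+1)^γ) = fun y : ℝ => (1+y)^γ := by
      funext y; rw [add_comm]
    rw [he] at this
    have h1 : (0:ℝ) - 1 = -1 := by norm_num
    have h2 : 1 + m - 1 = m := by ring
    rwa [h1, h2] at this
  have cont1 : ContinuousOn (fun y : ℝ => (x-y)^(ρ-1)) (Set.uIcc (-1) m) := by
    rw [Set.uIcc_of_le hm1.le]
    apply ContinuousOn.rpow_const
    · exact (continuous_const.sub continuous_id).continuousOn
    · intro y hy
      left
      have : y ≤ m := hy.2
      have : 0 < x - y := by linarith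
      exact this.ne'
  have part1 : IntervalIntegrable (fun y => (x-y)^(ρ-1) * (1+y)^γ) volume (-1) m :=
    int1.continuousOn_mul cont1
  -- part 2 : on [m, x]
  have base2 : IntervalIntegrable (fun u : ℝ => u^(ρ-1)) volume 0 (x-m) :=
    intervalIntegrable_rpow' (by linarith)
  have int2 : IntervalIntegrable (fun y : ℝ => (x-y)^(ρ-1)) volume m x := by
    have := (base2.comp_sub_left x).symm
    have h1 : x - 0 = x := by ring
    have h2 : x - (x - m) = m := by ring
    rwa [h1, h2] at this
  have cont2 : ContinuousOn (fun y : ℝ => (1+y)^γ) (Set.uIcc m x) := by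
    rw [Set.uIcc_of_le hm2.le]
    apply ContinuousOn.rpow_const
    · exact (continuous_const.add continuous_id).continuousOn
    · intro y hy
      left
      have : m ≤ y := hy.1
      have : 0 < 1 + y := by linarith
      exact this.ne'
  have part2 : IntervalIntegrable (fun y => (x-y)^(ρ-1) * (1+y)^γ) volume m x :=
    int2.mul_continuousOn cont2
  exact part1.trans part2

lemma keyInt {γ ρ x : ℝ} (hγ : -1 < γ) (hρ : 0 < ρ) (hx : -1 < x) :
    ∫ y in (-1:ℝ)..x, (x-y)^(ρ-1) * (1+y)^γ
      = Real.Gamma (γ+1) * Real.Gamma ρ / Real.Gamma (γ+1+ρ) * (1+x)^(ρ+γ) := by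
  set c : ℝ := 1 + x with hc
  have hcpos : 0 < c := by rw [hc]; linarith
  have hsub := intervalIntegral.integral_comp_mul_add
    (a := (0:ℝ)) (b := 1) (fun y => (x-y)^(ρ-1) * (1+y)^γ) hcpos.ne' (-1)
  have hb1 : c * 0 + -1 = (-1:ℝ) := by ring
  have hb2 : c * 1 + -1 = x := by rw [hc]; ring
  rw [hb1, hb2] at hsub
  have heq : ∀ t ∈ Set.uIcc (0:ℝ) 1,
      (x - (c * t + -1))^(ρ-1) * (1 + (c * t + -1))^γ
        = c^(ρ-1) * c^γ * (t^γ * (1-t)^(ρ-1)) := by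
    intro t ht
    rw [Set.uIcc_of_le (by norm_num : (0:ℝ) ≤ 1)] at ht
    obtain ⟨ht0, ht1⟩ := ht
    have h1 : x - (c * t + -1) = c * (1 - t) := by rw [hc]; ring
    have h2 : 1 + (c * t + -1) = c * t := by ring
    rw [h1, h2, Real.mul_rpow hcpos.le (by linarith), Real.mul_rpow hcpos.le ht0]
    ring
  rw [intervalIntegral.integral_congr heq] at hsub
  rw [intervalIntegral.integral_const_mul] at hsub
  have hbeta : ∫ t in (0:ℝ)..1, t^γ * (1-t)^(ρ-1)
      = Real.Gamma (γ+1) * Real.Gamma ρ / Real.Gamma (γ+1+ρ) := by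
    have := betaReal (p := γ+1) (q := ρ) (by linarith) hρ
    simpa using this
  rw [hbeta] at hsub
  -- hsub : ∫ t in 0..1, ... = c⁻¹ • (∫ y in -1..x, ...)
  -- we need to solve for the integral
  have hint : c * (c^(ρ-1) * c^γ * (Real.Gamma (γ+1) * Real.Gamma ρ / Real.Gamma (γ+1+ρ)))
      = ∫ y in (-1:ℝ)..x, (x-y)^(ρ-1) * (1+y)^γ := by
    rw [hsub, smul_eq_mul, ← mul_assoc, mul_inv_cancel₀ hcpos.ne', one_mul]
  rw [← hint]
  have hpow : c * (c^(ρ-1) * c^γ) = c^(ρ+γ) := by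
    rw [← Real.rpow_add hcpos, show ρ - 1 + γ = ρ + γ - 1 by ring]
    nth_rewrite 1 [← Real.rpow_one c]
    rw [← Real.rpow_add hcpos]
    norm_num
  calc c * (c^(ρ-1) * c^γ * (Real.Gamma (γ+1) * Real.Gamma ρ / Real.Gamma (γ+1+ρ)))
      = (c * (c^(ρ-1) * c^γ)) * (Real.Gamma (γ+1) * Real.Gamma ρ / Real.Gamma (γ+1+ρ)) := by ring
    _ = Real.Gamma (γ+1) * Real.Gamma ρ / Real.Gamma (γ+1+ρ) * (1+x)^(ρ+γ) := by
        rw [hpow, hc]; ring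

end BatemanAux

/-- Lemma 2.5, left integral / Bateman formula. -/
theorem stmt3 (ρ α β : ℝ) (hρ : 0 < ρ) (hβ : -1 < β) (n : ℕ) :
    ∀ x ∈ Set.Ioo (-1 : ℝ) 1,
      Iminus ρ (fun y => (1 + y) ^ β * jacobiP α β n y) x =
        Real.Gamma ((n : ℝ) + β + 1) / Real.Gamma ((n : ℝ) + β + ρ + 1) *
          ((1 + x) ^ (β + ρ) * jacobiP (α - ρ) (β + ρ) n x) := by
  intro x hx
  obtain ⟨hx1, hx2⟩ := hx
  have hx0 : (0:ℝ) < 1 + x := by linarith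
  -- Step 1: rewrite the integrand as a finite sum
  have hcong : ∀ y ∈ Set.uIcc (-1:ℝ) x,
      (x - y) ^ (ρ-1) * ((1 + y) ^ β * jacobiP α β n y)
      = ∑ j ∈ range (n+1),
          ((ap j ((n:ℝ)+α+β+1) / j.factorial) * (ap (n-j) (β+j+1) / (n-j).factorial)
            * (-1:ℝ)^(n-j) * ((1:ℝ)/2)^j)
            * ((x-y)^(ρ-1) * (1+y)^(β+j)) := by
    intro y hy
    rw [Set.uIcc_of_le hx1.le] at hy
    have hy1 : (0:ℝ) ≤ 1 + y := by linarith [hy.1]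
    rw [jacobiC α β n y, Finset.mul_sum, Finset.mul_sum]
    refine Finset.sum_congr rfl fun j hj => ?_
    have hpow : (1+y)^β * (1+y)^(j:ℕ) = (1+y)^(β+(j:ℝ)) := by
      rcases eq_or_lt_of_le hy1 with h0 | h0
      · rcases Nat.eq_zero_or_pos j with hj0 | hj0
        · subst hj0; simp
        · rw [← h0]
          have hbj : (0:ℝ) < β + j := by
            have : (1:ℝ) ≤ j := by exact_mod_cast hj0
            linarith
          rw [zero_pow hj0.ne', Real.zero_rpow hbj.ne']
          ring
      · rw [← Real.rpow_natCast (1+y) j, ← Real.rpow_add h0]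
    have hsplit : ((y+1)/2)^j = (1/2:ℝ)^j * (1+y)^(j:ℕ) := by
      rw [div_pow, div_pow]
      rw [show (y+1) = (1+y) by ring]
      ring
    rw [hsplit, ← hpow]
    ring
  unfold Iminus
  rw [intervalIntegral.integral_congr hcong]
  rw [intervalIntegral.integral_finset_sum (fun j hj => by
    have hγ : (-1:ℝ) < β + j := by
      have : (0:ℝ) ≤ j := Nat.cast_nonneg j
      linarith
    exact (keyIntegrable hγ hρ hx1).const_mul _)]
  -- Step 2 : evaluate each integral
  have heval : ∀ j ∈ range (n+1),
      (∫ y in (-1:ℝ)..x,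
        ((ap j ((n:ℝ)+α+β+1) / j.factorial) * (ap (n-j) (β+j+1) / (n-j).factorial)
            * (-1:ℝ)^(n-j) * ((1:ℝ)/2)^j)
            * ((x-y)^(ρ-1) * (1+y)^(β+(j:ℝ))))
      = ((ap j ((n:ℝ)+α+β+1) / j.factorial) * (ap (n-j) (β+j+1) / (n-j).factorial)
            * (-1:ℝ)^(n-j) * ((1:ℝ)/2)^j)
          * (Real.Gamma (β+j+1) * Real.Gamma ρ / Real.Gamma (β+j+1+ρ) * (1+x)^(ρ+(β+(j:ℝ)))) := by
    intro j hj
    have hγ : (-1:ℝ) < β + j := by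
      have : (0:ℝ) ≤ j := Nat.cast_nonneg j
      linarith
    rw [intervalIntegral.integral_const_mul, keyInt hγ hρ hx1]
  rw [Finset.sum_congr rfl heval]
  -- Step 3 : expand the RHS
  rw [jacobiC (α-ρ) (β+ρ) n x]
  rw [Finset.mul_sum, Finset.mul_sum, Finset.mul_sum]
  refine Finset.sum_congr rfl fun j hj => ?_
  have hjn : j ≤ n := by simp only [mem_range] at hj; omega
  -- Gamma facts
  have hj0 : (0:ℝ) ≤ (j:ℝ) := Nat.cast_nonneg j
  have hb1 : (0:ℝ) < β + j + 1 := by linarith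
  have hb2 : (0:ℝ) < β + ρ + j + 1 := by linarith
  have hcast : ((n - j : ℕ) : ℝ) = (n:ℝ) - j := by rw [Nat.cast_sub hjn]
  have e1 : ap (n-j) (β+(j:ℝ)+1) = Real.Gamma ((n:ℝ)+β+1) / Real.Gamma (β+(j:ℝ)+1) := by
    have h := gamma_ap hb1 (n-j)
    rw [hcast, show β+(j:ℝ)+1+((n:ℝ)-j) = (n:ℝ)+β+1 by ring] at h
    rw [h]
    field_simp [(Real.Gamma_pos_of_pos hb1).ne']
  have e2 : ap (n-j) (β+ρ+(j:ℝ)+1) = Real.Gamma ((n:ℝ)+β+ρ+1) / Real.Gamma (β+ρ+(j:ℝ)+1) := by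
    have h := gamma_ap hb2 (n-j)
    rw [hcast, show β+ρ+(j:ℝ)+1+((n:ℝ)-j) = (n:ℝ)+β+ρ+1 by ring] at h
    rw [h]
    field_simp [(Real.Gamma_pos_of_pos hb2).ne']
  have hT : (n:ℝ)+(α-ρ)+(β+ρ)+1 = (n:ℝ)+α+β+1 := by ring
  have harg : β+(j:ℝ)+1+ρ = β+ρ+(j:ℝ)+1 := by ring
  have hxpow : (1+x)^(ρ+(β+(j:ℝ))) = (1+x)^(β+ρ) * (1+x)^(j:ℕ) := by
    rw [← Real.rpow_natCast (1+x) j, ← Real.rpow_add hx0]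
    ring_nf
  rw [hT, e1, e2, harg, hxpow]
  have g1 : Real.Gamma ρ ≠ 0 := (Real.Gamma_pos_of_pos hρ).ne'
  have g2 : Real.Gamma (β+(j:ℝ)+1) ≠ 0 := (Real.Gamma_pos_of_pos hb1).ne'
  have g3 : Real.Gamma (β+ρ+(j:ℝ)+1) ≠ 0 := (Real.Gamma_pos_of_pos hb2).ne'
  have g4 : Real.Gamma ((n:ℝ)+β+ρ+1) ≠ 0 := by
    refine (Real.Gamma_pos_of_pos ?_).ne'
    have : (0:ℝ) ≤ (n:ℝ) := Nat.cast_nonneg n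
    linarith
  have f1 : (j.factorial : ℝ) ≠ 0 := by exact_mod_cast j.factorial_ne_zero
  have f2 : ((n-j).factorial : ℝ) ≠ 0 := by exact_mod_cast (n-j).factorial_ne_zero
  field_simp
  ring_nf
  have hpw : ((1:ℝ)/2)^j * (1+x)^j = (1/2 + x*(1/2))^j := by
    rw [← mul_pow]; congr 1; ring
  linear_combination (ap j (1 + ↑n + α + β) * Real.Gamma (1 + ↑n + β)) * hpw
end

section
/- Let α, β ∈ ℝ be such that n + α + β ∉ {−1, −2, −3, …} for every integer n ≥ 1 (equivalently, α + β is not an integer ≤ −2). Then the Jacobi polynomials with real parameters satisfy the three-term recurrence: for every n ≥ 1 and every x ∈ ℝ, P_{n+1}^{(α,β)}(x) = (a_n x − b_n) P_n^{(α,β)}(x) − c_n P_{n−1}^{(α,β)}(x), where a_n = (2n+α+β+1)(2n+α+β+2) / (2(n+1)(n+α+β+1)), b_n = (β²−α²)(2n+α+β+1) / (2(n+1)(n+α+β+1)(2n+α+β)), and c_n = (n+α)(n+β)(2n+α+β+2) / ((n+1)(n+α+β+1)(2n+α+β)); moreover P_0^{(α,β)}(x) = 1 and P_1^{(α,β)}(x)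 = (α+β+2)x/2 + (α−β)/2. -/
open MeasureTheory Filter Finset

/-! ### Auxiliary machinery for the three-term recurrence -/

noncomputable def pe (k : ℕ) (x : ℝ) : ℝ := (ascPochhammer ℝ k).eval x

lemma pe_zero (x : ℝ) : pe 0 x = 1 := by simp [pe]

lemma pe_succ (k : ℕ) (x : ℝ) : pe (k+1) x = pe k x * (x + k) := by
  simp [pe, ascPochhammer_succ_eval]

lemma pe_succ' (k : ℕ) (x : ℝ) : pe (k+1) x = x * pe k (x+1) := by
  simp [pe, ascPochhammer_succ_left, Polynomial.eval_comp]

noncomputable def Cf (a b : ℝ) (N j : ℕ) : ℝ :=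
  pe j ((N : ℝ) + a + b + 1) / (Nat.factorial j : ℝ) *
    (pe (N - j) (a + (j : ℝ) + 1) / (Nat.factorial (N - j) : ℝ))

lemma jacobiP_eq (a b : ℝ) (N : ℕ) (x : ℝ) :
    jacobiP a b N x = ∑ j ∈ Finset.range (N + 1), Cf a b N j * ((x - 1) / 2) ^ j := by
  unfold jacobiP Cf pe
  exact Finset.sum_congr rfl fun j _ => by ring

lemma sum_extend {f : ℕ → ℝ} {c d : ℕ} (h : c ≤ d) :
    ∑ j ∈ Finset.range c, f j = ∑ j ∈ Finset.range d, if j < c then f j else 0 := by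
  rw [← Finset.sum_filter]
  congr 1
  ext j
  simp only [Finset.mem_filter, Finset.mem_range]
  omega

lemma sum_shift {g : ℕ → ℝ} {c : ℕ} :
    ∑ j ∈ Finset.range (c+1), (if 1 ≤ j then g j else 0) = ∑ j ∈ Finset.range c, g (j+1) := by
  rw [Finset.sum_range_succ']
  simp

lemma fc1 (m : ℕ) : ((Nat.factorial (m+1) : ℕ) : ℝ) = ((m:ℝ)+1) * (Nat.factorial m : ℝ) := by
  rw [Nat.factorial_succ]; push_cast; ring

lemma fc2 (m : ℕ) : ((Nat.factorial (m+2) : ℕ) : ℝ) = ((m:ℝ)+2) * (((m:ℝ)+1) * (Nat.factorial m : ℝ)) := by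
  rw [Nat.factorial_succ, Nat.factorial_succ]; push_cast; ring

lemma fne (m : ℕ) : (Nat.factorial m : ℝ) ≠ 0 :=
  Nat.cast_ne_zero.mpr m.factorial_ne_zero

/-- Cleared coefficient identity, case `j = 0`. -/
lemma id_zero (a b : ℝ) (m : ℕ) :
    2*(((m:ℝ)+1)+1)*(((m:ℝ)+1)+a+b+1)*(2*((m:ℝ)+1)+a+b) * Cf a b (m+2) 0 =
      ((2*((m:ℝ)+1)+a+b)*(2*((m:ℝ)+1)+a+b+1)*(2*((m:ℝ)+1)+a+b+2)
        - (b^2-a^2)*(2*((m:ℝ)+1)+a+b+1)) * Cf a b (m+1) 0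
      - 2*(((m:ℝ)+1)+a)*(((m:ℝ)+1)+b)*(2*((m:ℝ)+1)+a+b+2) * Cf a b m 0 := by
  unfold Cf
  simp only [Nat.sub_zero, Nat.cast_zero, add_zero, pe_zero, Nat.factorial_zero]
  rw [show pe (m+2) (a+1) = pe m (a+1) * ((a+1+m)*(a+1+m+1)) from by
        rw [pe_succ, pe_succ]; push_cast; ring,
      show pe (m+1) (a+1) = pe m (a+1) * (a+1+(m:ℝ)) from pe_succ m _,
      fc2, fc1]
  have h1 : (m:ℝ)+1 ≠ 0 := by positivity
  have h4 : (m:ℝ)+2 ≠ 0 := by positivity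
  field_simp
  ring

set_option maxHeartbeats 1000000 in
/-- Cleared coefficient identity, case `j = m+1`. -/
lemma id_n (a b : ℝ) (m : ℕ) (hz : ((m:ℝ)+1)+a+b+1 ≠ 0) :
    2*(((m:ℝ)+1)+1)*(((m:ℝ)+1)+a+b+1)*(2*((m:ℝ)+1)+a+b) * Cf a b (m+2) (m+1) =
      ((2*((m:ℝ)+1)+a+b)*(2*((m:ℝ)+1)+a+b+1)*(2*((m:ℝ)+1)+a+b+2)
        - (b^2-a^2)*(2*((m:ℝ)+1)+a+b+1)) * Cf a b (m+1) (m+1)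
      + 2 * ((2*((m:ℝ)+1)+a+b)*(2*((m:ℝ)+1)+a+b+1)*(2*((m:ℝ)+1)+a+b+2)) * Cf a b (m+1) m := by
  unfold Cf
  simp only [Nat.sub_self, pe_zero, Nat.factorial_zero,
    show (m+2)-(m+1) = 1 from by omega, show (m+1)-m = 1 from by omega]
  have e1 : pe 1 (a+((m+1:ℕ):ℝ)+1) = a+((m:ℝ)+1)+1 := by
    rw [show (1:ℕ) = 0+1 from rfl, pe_succ, pe_zero]; push_cast; ring
  have e2 : pe 1 (a+(m:ℝ)+1) = a+(m:ℝ)+1 := by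
    rw [show (1:ℕ) = 0+1 from rfl, pe_succ, pe_zero]; push_cast; ring
  have key : (((m+1:ℕ):ℝ)+a+b+1) * pe (m+1) (((m+2:ℕ):ℝ)+a+b+1)
      = pe m (((m+1:ℕ):ℝ)+a+b+1) *
        (((((m:ℝ)+1)+a+b+1)+(m:ℝ))*((((m:ℝ)+1)+a+b+1)+((m:ℝ)+1))) := by
    rw [show ((m+2:ℕ):ℝ)+a+b+1 = (((m+1:ℕ):ℝ)+a+b+1) + 1 from by push_cast; ring,
       ← pe_succ', pe_succ, pe_succ]; push_cast; ring
  have hX : pe (m+1) (((m+2:ℕ):ℝ)+a+b+1)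
      = pe m (((m+1:ℕ):ℝ)+a+b+1) *
        (((((m:ℝ)+1)+a+b+1)+(m:ℝ))*((((m:ℝ)+1)+a+b+1)+((m:ℝ)+1))) / (((m+1:ℕ):ℝ)+a+b+1) := by
    rw [eq_div_iff (by push_cast; exact hz)]; linear_combination key
  have e3 : pe (m+1) (((m+1:ℕ):ℝ)+a+b+1) = pe m (((m+1:ℕ):ℝ)+a+b+1) * ((((m:ℝ)+1)+a+b+1)+(m:ℝ)) := by
    rw [pe_succ]; push_cast; ring
  rw [hX, e1, e2, e3, fc1]
  simp only [Nat.factorial_one, Nat.cast_one]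
  have h1 : (m:ℝ)+1 ≠ 0 := by positivity
  have hz' : ((m+1:ℕ):ℝ)+a+b+1 ≠ 0 := by push_cast; exact hz
  push_cast at hz' ⊢
  field_simp
  ring

set_option maxHeartbeats 1000000 in
/-- Cleared coefficient identity, case `j = m+2`. -/
lemma id_top (a b : ℝ) (m : ℕ) (hz : ((m:ℝ)+1)+a+b+1 ≠ 0) :
    2*(((m:ℝ)+1)+1)*(((m:ℝ)+1)+a+b+1)*(2*((m:ℝ)+1)+a+b) * Cf a b (m+2) (m+2) =
      2 * ((2*((m:ℝ)+1)+a+b)*(2*((m:ℝ)+1)+a+b+1)*(2*((m:ℝ)+1)+a+b+2)) * Cf a b (m+1) (m+1) := by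
  unfold Cf
  simp only [Nat.sub_self, pe_zero, Nat.factorial_zero]
  have key : (((m+1:ℕ):ℝ)+a+b+1) * pe (m+2) (((m+2:ℕ):ℝ)+a+b+1)
      = pe (m+1) (((m+1:ℕ):ℝ)+a+b+1) *
        (((((m:ℝ)+1)+a+b+1)+((m:ℝ)+1))*((((m:ℝ)+1)+a+b+1)+((m:ℝ)+2))) := by
    rw [show ((m+2:ℕ):ℝ)+a+b+1 = (((m+1:ℕ):ℝ)+a+b+1) + 1 from by push_cast; ring,
      ← pe_succ', pe_succ, pe_succ]; push_cast; ring
  have hX : pe (m+2) (((m+2:ℕ):ℝ)+a+b+1)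
      = pe (m+1) (((m+1:ℕ):ℝ)+a+b+1) *
        (((((m:ℝ)+1)+a+b+1)+((m:ℝ)+1))*((((m:ℝ)+1)+a+b+1)+((m:ℝ)+2))) / ((((m+1:ℕ):ℝ)+a+b+1)) := by
    rw [eq_div_iff (by push_cast; exact hz)]
    linear_combination key
  rw [hX, fc2, fc1]
  have h1 : (m:ℝ)+1 ≠ 0 := by positivity
  have h4 : (m:ℝ)+2 ≠ 0 := by positivity
  have hz' : ((m+1:ℕ):ℝ)+a+b+1 ≠ 0 := by push_cast; exact hz
  push_cast at hz' ⊢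
  field_simp
  ring

set_option maxHeartbeats 4000000 in
/-- Cleared coefficient identity, middle case. -/
lemma id_mid (a b : ℝ) (i k m : ℕ) (hm : m = i+1+k) (hz : ((m:ℝ)+1)+a+b+1 ≠ 0) :
    2*(((m:ℝ)+1)+1)*(((m:ℝ)+1)+a+b+1)*(2*((m:ℝ)+1)+a+b) * Cf a b (m+2) (i+1) =
      ((2*((m:ℝ)+1)+a+b)*(2*((m:ℝ)+1)+a+b+1)*(2*((m:ℝ)+1)+a+b+2)
        - (b^2-a^2)*(2*((m:ℝ)+1)+a+b+1)) * Cf a b (m+1) (i+1)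
      + 2 * ((2*((m:ℝ)+1)+a+b)*(2*((m:ℝ)+1)+a+b+1)*(2*((m:ℝ)+1)+a+b+2)) * Cf a b (m+1) i
      - 2*(((m:ℝ)+1)+a)*(((m:ℝ)+1)+b)*(2*((m:ℝ)+1)+a+b+2) * Cf a b m (i+1) := by
  subst hm
  unfold Cf
  simp only [show (i+1+k+2)-(i+1) = k+2 from by omega, show (i+1+k+1)-(i+1) = k+1 from by omega,
    show (i+1+k+1)-i = k+2 from by omega, show (i+1+k)-(i+1) = k from by omega]
  have key : (((i+1+k+1:ℕ):ℝ)+a+b+1) * pe (i+1) (((i+1+k+2:ℕ):ℝ)+a+b+1)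
      = pe i (((i+1+k+1:ℕ):ℝ)+a+b+1) *
        (((((i+1+k+1:ℕ):ℝ)+a+b+1)+(i:ℝ))*((((i+1+k+1:ℕ):ℝ)+a+b+1)+(i:ℝ)+1)) := by
    rw [show ((i+1+k+2:ℕ):ℝ)+a+b+1 = (((i+1+k+1:ℕ):ℝ)+a+b+1)+1 from by push_cast; ring,
      ← pe_succ', pe_succ, pe_succ]
    all_goals (push_cast; try ring)
  have hz' : ((i+1+k+1:ℕ):ℝ)+a+b+1 ≠ 0 := by intro h; apply hz; push_cast at h ⊢; linarith
  have hX : pe (i+1) (((i+1+k+2:ℕ):ℝ)+a+b+1)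
      = pe i (((i+1+k+1:ℕ):ℝ)+a+b+1) *
        (((((i+1+k+1:ℕ):ℝ)+a+b+1)+(i:ℝ))*((((i+1+k+1:ℕ):ℝ)+a+b+1)+(i:ℝ)+1))
        / (((i+1+k+1:ℕ):ℝ)+a+b+1) := by
    rw [eq_div_iff hz']; linear_combination key
  have eB1 : pe (k+2) (a+((i+1:ℕ):ℝ)+1)
      = pe k (a+((i+1:ℕ):ℝ)+1) * ((a+(i:ℝ)+1+1+(k:ℝ))*(a+(i:ℝ)+1+1+(k:ℝ)+1)) := by
    rw [pe_succ, pe_succ]; push_cast; ring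
  have eB2 : pe (k+1) (a+((i+1:ℕ):ℝ)+1) = pe k (a+((i+1:ℕ):ℝ)+1) * (a+(i:ℝ)+1+1+(k:ℝ)) := by
    rw [pe_succ]; push_cast; ring
  have eB3 : pe (k+2) (a+(i:ℝ)+1)
      = (a+(i:ℝ)+1) * (pe k (a+((i+1:ℕ):ℝ)+1) * (a+(i:ℝ)+1+1+(k:ℝ))) := by
    rw [pe_succ', show a+(i:ℝ)+1+1 = a+((i+1:ℕ):ℝ)+1 from by push_cast; ring, pe_succ]
    all_goals (push_cast; try ring)
  have eA2 : pe (i+1) (((i+1+k+1:ℕ):ℝ)+a+b+1)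
      = pe i (((i+1+k+1:ℕ):ℝ)+a+b+1) * ((((i+1+k+1:ℕ):ℝ)+a+b+1)+(i:ℝ)) := pe_succ i _
  have eA3 : pe (i+1) (((i+1+k:ℕ):ℝ)+a+b+1)
      = (((i+1+k:ℕ):ℝ)+a+b+1) * pe i (((i+1+k+1:ℕ):ℝ)+a+b+1) := by
    rw [pe_succ', show ((i+1+k:ℕ):ℝ)+a+b+1+1 = ((i+1+k+1:ℕ):ℝ)+a+b+1 from by push_cast; ring]
  rw [hX, eB1, eB2, eB3, eA2, eA3, fc2, fc1, fc1]
  have h1 : (i:ℝ)+1 ≠ 0 := by positivity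
  have h3 : (k:ℝ)+1 ≠ 0 := by positivity
  have h4 : (k:ℝ)+2 ≠ 0 := by positivity
  have hFi : ((Nat.factorial i : ℕ):ℝ) ≠ 0 := fne i
  have hFk : ((Nat.factorial k : ℕ):ℝ) ≠ 0 := fne k
  push_cast at hz' ⊢
  field_simp
  ring

set_option maxHeartbeats 1000000 in
/-- The three-term recurrence for `n = m+1`. -/
lemma key_rec (α β : ℝ) (m : ℕ) (hz : ((m:ℝ)+1)+α+β+1 ≠ 0) (hw : 2*((m:ℝ)+1)+α+β ≠ 0)
    (x : ℝ) :
    jacobiP α β (m+2) x =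
      ((2*((m:ℝ)+1)+α+β+1)*(2*((m:ℝ)+1)+α+β+2)/(2*(((m:ℝ)+1)+1)*(((m:ℝ)+1)+α+β+1)) * x
        - (β^2-α^2)*(2*((m:ℝ)+1)+α+β+1)/(2*(((m:ℝ)+1)+1)*(((m:ℝ)+1)+α+β+1)*(2*((m:ℝ)+1)+α+β)))
        * jacobiP α β (m+1) x
      - ((((m:ℝ)+1)+α)*(((m:ℝ)+1)+β)*(2*((m:ℝ)+1)+α+β+2)/((((m:ℝ)+1)+1)*(((m:ℝ)+1)+α+β+1)*(2*((m:ℝ)+1)+α+β)))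
        * jacobiP α β m x := by
  have hn1 : (((m:ℝ)+1)+1) ≠ 0 := by positivity
  set D := 2*(((m:ℝ)+1)+1)*(((m:ℝ)+1)+α+β+1)*(2*((m:ℝ)+1)+α+β) with hD
  set PA := (2*((m:ℝ)+1)+α+β)*(2*((m:ℝ)+1)+α+β+1)*(2*((m:ℝ)+1)+α+β+2) with hPA
  set PB := (β^2-α^2)*(2*((m:ℝ)+1)+α+β+1) with hPB
  set PG := 2*(((m:ℝ)+1)+α)*(((m:ℝ)+1)+β)*(2*((m:ℝ)+1)+α+β+2) with hPG
  have hDne : D ≠ 0 := by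
    rw [hD]; exact mul_ne_zero (mul_ne_zero (by positivity) hz) hw
  rw [jacobiP_eq, jacobiP_eq, jacobiP_eq]
  set t := (x - 1) / 2 with ht
  apply mul_left_cancel₀ hDne
  have hH : D * ∑ j ∈ Finset.range (m+3), Cf α β (m+2) j * t ^ j
      = (PA * x - PB) * ∑ j ∈ Finset.range (m+2), Cf α β (m+1) j * t ^ j
        - PG * ∑ j ∈ Finset.range (m+1), Cf α β m j * t ^ j := by
    have hsplit : (PA * x - PB) * ∑ j ∈ Finset.range (m+2), Cf α β (m+1) j * t ^ j
        = (∑ j ∈ Finset.range (m+3), if j < m+2 then (PA - PB) * Cf α β (m+1) j * t ^ j else 0)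
          + ∑ j ∈ Finset.range (m+3), (if 1 ≤ j then 2 * PA * Cf α β (m+1) (j-1) * t ^ j else 0) := by
      rw [← sum_extend (by omega), sum_shift, Finset.mul_sum, ← Finset.sum_add_distrib]
      refine Finset.sum_congr rfl fun j _ => ?_
      have hx : x = 2 * t + 1 := by rw [ht]; ring
      rw [hx]
      simp only [Nat.add_sub_cancel]
      ring
    have hlow : PG * ∑ j ∈ Finset.range (m+1), Cf α β m j * t ^ j
        = ∑ j ∈ Finset.range (m+3), if j < m+1 then PG * Cf α β m j * t ^ j else 0 := by
      rw [← sum_extend (by omega), Finset.mul_sum]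
      exact Finset.sum_congr rfl fun j _ => by ring
    rw [hsplit, hlow, Finset.mul_sum, ← Finset.sum_add_distrib, ← Finset.sum_sub_distrib]
    refine Finset.sum_congr rfl fun j hj => ?_
    have hj3 : j < m + 3 := Finset.mem_range.mp hj
    by_cases hj0 : j = 0
    · subst hj0
      rw [if_pos (by omega), if_neg (by omega), if_pos (by omega)]
      have := id_zero α β m
      rw [← hD, ← hPA, ← hPB, ← hPG] at this
      simp only [pow_zero]
      linear_combination this
    · by_cases hjt : j = m+2
      · subst hjt
        rw [if_neg (by omega), if_pos (by omega), if_neg (by omega)]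
        have := id_top α β m hz
        rw [← hD, ← hPA] at this
        simp only [show m+2-1 = m+1 from by omega]
        linear_combination (t^(m+2)) * this
      · by_cases hjn : j = m+1
        · subst hjn
          rw [if_pos (by omega), if_pos (by omega), if_neg (by omega)]
          have := id_n α β m hz
          rw [← hD, ← hPA, ← hPB] at this
          simp only [Nat.add_sub_cancel]
          linear_combination (t^(m+1)) * this
        · obtain ⟨i, rfl⟩ : ∃ i, j = i + 1 := ⟨j - 1, by omega⟩
          obtain ⟨k, hk⟩ : ∃ k, m = i + 1 + k := ⟨m - i - 1, by omega⟩
          rw [if_pos (by omega), if_pos (by omega), if_pos (by omega)]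
          have := id_mid α β i k m hk hz
          rw [← hD, ← hPA, ← hPB, ← hPG] at this
          simp only [Nat.add_sub_cancel]
          linear_combination (t^(i+1)) * this
  rw [hH]
  have hDA : PA = D * ((2*((m:ℝ)+1)+α+β+1)*(2*((m:ℝ)+1)+α+β+2)/(2*(((m:ℝ)+1)+1)*(((m:ℝ)+1)+α+β+1))) := by
    rw [hD, hPA]; field_simp; try ring
  have hDB : PB = D * ((β^2-α^2)*(2*((m:ℝ)+1)+α+β+1)/(2*(((m:ℝ)+1)+1)*(((m:ℝ)+1)+α+β+1)*(2*((m:ℝ)+1)+α+β))) := by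
    rw [hD, hPB]; field_simp; try ring
  have hDG : PG = D * ((((m:ℝ)+1)+α)*(((m:ℝ)+1)+β)*(2*((m:ℝ)+1)+α+β+2)/((((m:ℝ)+1)+1)*(((m:ℝ)+1)+α+β+1)*(2*((m:ℝ)+1)+α+β))) := by
    rw [hD, hPG]; field_simp; try ring
  linear_combination (x * ∑ j ∈ Finset.range (m+2), Cf α β (m+1) j * t ^ j) * hDA
    - (∑ j ∈ Finset.range (m+2), Cf α β (m+1) j * t ^ j) * hDB
    - (∑ j ∈ Finset.range (m+1), Cf α β m j * t ^ j) * hDG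

/-- three-term recurrence for Jacobi polynomials with real parameters. -/
theorem stmt6 (α β : ℝ)
    (hcond : ∀ n : ℕ, 1 ≤ n → ∀ m : ℕ, (n : ℝ) + α + β ≠ -((m : ℝ) + 1)) :
    (∀ n : ℕ, 1 ≤ n → ∀ x : ℝ,
        jacobiP α β (n + 1) x =
          ((2 * (n : ℝ) + α + β + 1) * (2 * (n : ℝ) + α + β + 2) /
              (2 * ((n : ℝ) + 1) * ((n : ℝ) + α + β + 1)) * x -
            (β ^ 2 - α ^ 2) * (2 * (n : ℝ) + α + β + 1) /
              (2 * ((n : ℝ) + 1) * ((n : ℝ) + α + β + 1) * (2 * (n : ℝ) + α + β))) *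
            jacobiP α β n x -
          ((n : ℝ) + α) * ((n : ℝ) + β) * (2 * (n : ℝ) + α + β + 2) /
              (((n : ℝ) + 1) * ((n : ℝ) + α + β + 1) * (2 * (n : ℝ) + α + β)) *
            jacobiP α β (n - 1) x) ∧
    (∀ x : ℝ, jacobiP α β 0 x = 1) ∧
    (∀ x : ℝ, jacobiP α β 1 x = (α + β + 2) * x / 2 + (α - β) / 2) := by
  refine ⟨?_, ?_, ?_⟩
  · intro n hn x
    obtain ⟨m, rfl⟩ : ∃ m, n = m + 1 := ⟨n - 1, by omega⟩
    have hz : ((m:ℝ)+1)+α+β+1 ≠ 0 := by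
      have h := hcond (m+1) (by omega) 0
      push_cast at h
      intro hc; exact h (by linarith)
    have hw : 2*((m:ℝ)+1)+α+β ≠ 0 := by
      have h := hcond (m+1) (by omega) m
      push_cast at h
      intro hc; exact h (by linarith)
    have hk := key_rec α β m hz hw x
    simp only [Nat.add_sub_cancel]
    push_cast at hk ⊢
    convert hk using 2 <;> push_cast <;> ring
  · intro x
    simp [jacobiP]
  · intro x
    rw [jacobiP]
    rw [Finset.sum_range_succ, Finset.sum_range_one]
    simp [ascPochhammer_one]
    ring
end

section
/- Let l, m ∈ ℕ (l, m ≥ 1) and let n be an integer with n ≥ l + m. Then for all x ∈ ℝ, the Jacobi polynomial with negative integer parameters factors as P_n^{(−l,−m)}(x) = ((x−1)/2)^l · ((x+1)/2)^m · P_{n−l−m}^{(l,m)}(x). -/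
open MeasureTheory Filter Finset

/- ### Auxiliary definitions and lemmas for Statement 7 -/

/-- The Jacobi sum `P_N^{(l,m)}` written with binomial coefficients. -/
noncomputable def stmt7SS (N l m : ℕ) (u : ℝ) : ℝ :=
  ∑ k ∈ Finset.range (N + 1),
    ((N + l + m + k).choose k : ℝ) * ((N + l).choose (N - k) : ℝ) * u ^ k

/-- The nonvanishing part of `P_n^{(-l,-m)}` written with binomial coefficients. -/
noncomputable def stmt7RR (N l m : ℕ) (u : ℝ) : ℝ :=
  ∑ i ∈ Finset.range (N + m + 1),
    ((N + l + i).choose N : ℝ) * ((N + m).choose i : ℝ) * u ^ i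

lemma stmt7_base0 (N l k : ℕ) (hk : k ≤ N) :
    (N + l + k).choose k * (N + l).choose (N - k) = (N + l + k).choose N * N.choose k := by
  have h1 : (N + l + k).choose k = (N + l + k).choose (N + l) := by
    rw [← Nat.choose_symm (Nat.le_add_right (N + l) k)]
    congr 1; omega
  have h2 : (N + l).choose (N - k) = (N + l).choose (l + k) := by
    rw [← Nat.choose_symm (by omega : l + k ≤ N + l)]
    congr 1; omega
  have h3 := Nat.choose_mul (n := N + l + k) (by omega : l + k ≤ N + l)
  have h4 : (N + l + k).choose (l + k) = (N + l + k).choose N := by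
    rw [← Nat.choose_symm (by omega : N ≤ N + l + k)]
    congr 1; omega
  have h5 : (N + l + k - (l + k)) = N := by omega
  have h6 : (N + l - (l + k)) = N - k := by omega
  rw [h1, h2, h3, h4, h5, h6, Nat.choose_symm hk]

lemma stmt7_Srec (N l m : ℕ) (u : ℝ) :
    stmt7SS (N + 1) l (m + 1) u
      = stmt7SS (N + 1) l m u + u * stmt7SS N (l + 1) (m + 1) u := by
  unfold stmt7SS
  simp only [show N + 1 + l = N + l + 1 from by omega,
    show N + (l + 1) = N + l + 1 from by omega]
  rw [Finset.sum_range_succ' _ (N + 1), Finset.sum_range_succ' _ (N + 1), Finset.mul_sum]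
  have key : ∑ j ∈ Finset.range (N + 1),
      ((N + l + 1 + (m + 1) + (j + 1)).choose (j + 1) : ℝ) *
        ((N + l + 1).choose (N + 1 - (j + 1)) : ℝ) * u ^ (j + 1)
      = ∑ j ∈ Finset.range (N + 1),
      (((N + l + 1 + m + (j + 1)).choose (j + 1) : ℝ) *
        ((N + l + 1).choose (N + 1 - (j + 1)) : ℝ) * u ^ (j + 1)
      + u * (((N + l + 1 + (m + 1) + j).choose j : ℝ) *
        ((N + l + 1).choose (N - j) : ℝ) * u ^ j)) := by
    apply Finset.sum_congr rfl
    intro j hj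
    have p1 : (N + l + 1 + (m + 1) + (j + 1)).choose (j + 1)
        = (N + l + 1 + (m + 1) + j).choose j + (N + l + 1 + m + (j + 1)).choose (j + 1) := by
      have h := Nat.choose_succ_succ (N + l + 1 + (m + 1) + j) j
      rw [show N + l + 1 + (m + 1) + (j + 1) = N + l + 1 + (m + 1) + j + 1 from by omega, h]
      congr 2
      omega
    have e4 : N + 1 - (j + 1) = N - j := by omega
    rw [p1, e4]
    push_cast
    ring
  rw [key, Finset.sum_add_distrib]
  simp only [Nat.choose_zero_right, Nat.cast_one, one_mul, pow_zero, mul_one]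
  ring

lemma stmt7_Rrec (N l m : ℕ) (u : ℝ) :
    stmt7RR (N + 1) l (m + 1) u =
      (1 + u) * stmt7RR (N + 1) l m u + u * stmt7RR N (l + 1) (m + 1) u := by
  unfold stmt7RR
  simp only [show N + 1 + (m + 1) = N + m + 2 from by omega,
    show N + 1 + m = N + m + 1 from by omega,
    show N + (m + 1) = N + m + 1 from by omega,
    show N + (l + 1) = N + l + 1 from by omega,
    show N + 1 + l = N + l + 1 from by omega]
  rw [add_mul, one_mul]
  have hext : ∑ i ∈ Finset.range (N + m + 1 + 1),
      ((N + l + 1 + i).choose (N + 1) : ℝ) * ((N + m + 1).choose i : ℝ) * u ^ i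
      = ∑ i ∈ Finset.range (N + m + 2 + 1),
      ((N + l + 1 + i).choose (N + 1) : ℝ) * ((N + m + 1).choose i : ℝ) * u ^ i := by
    rw [Finset.sum_range_succ _ (N + m + 2),
      Nat.choose_eq_zero_of_lt (show N + m + 1 < N + m + 2 from by omega)]
    push_cast
    ring
  nth_rewrite 1 [hext]
  rw [Finset.sum_range_succ' _ (N + m + 2), Finset.sum_range_succ' _ (N + m + 2),
    Finset.mul_sum, Finset.mul_sum]
  have key : ∑ j ∈ Finset.range (N + m + 2),
      ((N + l + 1 + (j + 1)).choose (N + 1) : ℝ) * ((N + m + 2).choose (j + 1) : ℝ) * u ^ (j + 1)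
      = ∑ j ∈ Finset.range (N + m + 2),
      (((N + l + 1 + (j + 1)).choose (N + 1) : ℝ) * ((N + m + 1).choose (j + 1) : ℝ) * u ^ (j + 1)
      + (u * (((N + l + 1 + j).choose (N + 1) : ℝ) * ((N + m + 1).choose j : ℝ) * u ^ j)
      + u * (((N + l + 1 + j).choose N : ℝ) * ((N + m + 1).choose j : ℝ) * u ^ j))) := by
    apply Finset.sum_congr rfl
    intro j hj
    have p1 : (N + m + 2).choose (j + 1)
        = (N + m + 1).choose j + (N + m + 1).choose (j + 1) :=
      Nat.choose_succ_succ (N + m + 1) j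
    have p2 : (N + l + 1 + (j + 1)).choose (N + 1)
        = (N + l + 1 + j).choose N + (N + l + 1 + j).choose (N + 1) := by
      have h := Nat.choose_succ_succ (N + l + 1 + j) N
      rw [show N + l + 1 + (j + 1) = N + l + 1 + j + 1 from by omega, h]
    rw [p1, p2]
    push_cast
    ring
  rw [key, Finset.sum_add_distrib, Finset.sum_add_distrib]
  simp only [Nat.choose_zero_right, Nat.cast_one, one_mul, pow_zero, mul_one]
  ring

lemma stmt7_mainRS : ∀ N l m : ℕ, ∀ u : ℝ, stmt7RR N l m u = (1 + u) ^ m * stmt7SS N l m u := by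
  intro N
  induction N with
  | zero =>
    intro l m u
    unfold stmt7RR stmt7SS
    rw [add_comm (1 : ℝ) u, add_pow, Finset.sum_range_one]
    simp only [zero_add, Nat.add_zero, Nat.choose_zero_right, Nat.cast_one, one_mul,
      pow_zero, mul_one, one_pow, Nat.choose_self, Nat.zero_sub, Nat.sub_zero]
    apply Finset.sum_congr rfl
    intro i hi
    ring
  | succ N ih =>
    intro l m
    induction m generalizing l with
    | zero =>
      intro u
      unfold stmt7RR stmt7SS
      rw [pow_zero, one_mul]
      apply Finset.sum_congr (by norm_num)
      intro k hk
      rw [Finset.mem_range] at hk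
      have h := stmt7_base0 (N + 1) l k (by omega)
      rw [show N + 1 + l + 0 + k = N + 1 + l + k from by omega,
        show N + 1 + 0 = N + 1 from by omega]
      have h2 : ((N + 1 + l + k).choose (N + 1) : ℝ) * ((N + 1).choose k : ℝ)
          = ((N + 1 + l + k).choose k : ℝ) * ((N + 1 + l).choose (N + 1 - k) : ℝ) := by
        exact_mod_cast h.symm
      linear_combination u ^ k * h2
    | succ m ihm =>
      intro u
      rw [stmt7_Rrec, ihm l u, ih (l + 1) (m + 1) u, stmt7_Srec]
      ring

lemma stmt7_asc_prod (k : ℕ) (x : ℝ) :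
    (ascPochhammer ℝ k).eval x = ∏ r ∈ Finset.range k, (x + r) := by
  induction k with
  | zero => simp
  | succ k ih => rw [ascPochhammer_succ_eval, ih, Finset.prod_range_succ]

lemma stmt7_div1 (a k : ℕ) :
    (ascPochhammer ℝ k).eval ((a + 1 : ℕ) : ℝ) / (Nat.factorial k : ℝ)
      = ((a + k).choose k : ℝ) := by
  rw [← Nat.cast_ascFactorial, Nat.ascFactorial_eq_factorial_mul_choose, Nat.cast_mul,
    mul_div_cancel_left₀ _ (by exact_mod_cast Nat.factorial_ne_zero k : (Nat.factorial k : ℝ) ≠ 0)]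

lemma stmt7_stepA (N l m : ℕ) (x : ℝ) :
    jacobiP (l : ℝ) (m : ℝ) N x = stmt7SS N l m ((x - 1) / 2) := by
  unfold jacobiP stmt7SS
  apply Finset.sum_congr rfl
  intro k hk
  rw [Finset.mem_range] at hk
  have e1 : ((N : ℝ) + l + m + 1) = ((N + l + m + 1 : ℕ) : ℝ) := by push_cast; ring
  have e2 : ((l : ℝ) + k + 1) = ((l + k + 1 : ℕ) : ℝ) := by push_cast; ring
  rw [e1, e2, stmt7_div1 (N + l + m) k, stmt7_div1 (l + k) (N - k),
    show l + k + (N - k) = N + l from by omega]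

lemma stmt7_stepB (N l m : ℕ) (hl : 1 ≤ l) (x : ℝ) :
    jacobiP (-(l : ℝ)) (-(m : ℝ)) (N + l + m) x
      = ((x - 1) / 2) ^ l * stmt7RR N l m ((x - 1) / 2) := by
  unfold jacobiP
  rw [show N + l + m + 1 = l + (N + m + 1) from by omega, Finset.sum_range_add]
  have h0 : ∑ j ∈ Finset.range l,
      ((ascPochhammer ℝ j).eval (((N + l + m : ℕ) : ℝ) + -(l : ℝ) + -(m : ℝ) + 1) /
          (Nat.factorial j : ℝ)) *
        ((ascPochhammer ℝ (N + l + m - j)).eval (-(l : ℝ) + (j : ℝ) + 1) /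
          (Nat.factorial (N + l + m - j) : ℝ)) * ((x - 1) / 2) ^ j = 0 := by
    apply Finset.sum_eq_zero
    intro j hj
    rw [Finset.mem_range] at hj
    have hzero : (ascPochhammer ℝ (N + l + m - j)).eval (-(l : ℝ) + (j : ℝ) + 1) = 0 := by
      rw [stmt7_asc_prod]
      refine Finset.prod_eq_zero (i := l - 1 - j) (Finset.mem_range.mpr (by omega)) ?_
      rw [Nat.cast_sub (by omega : j ≤ l - 1), Nat.cast_sub (by omega : 1 ≤ l)]
      push_cast
      ring
    rw [hzero, zero_div, mul_zero, zero_mul]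
  rw [h0, zero_add]
  unfold stmt7RR
  rw [Finset.mul_sum]
  apply Finset.sum_congr rfl
  intro i hi
  rw [Finset.mem_range] at hi
  have a1 : ((N + l + m : ℕ) : ℝ) + -(l : ℝ) + -(m : ℝ) + 1 = ((N + 1 : ℕ) : ℝ) := by
    push_cast; ring
  have a2 : -(l : ℝ) + ((l + i : ℕ) : ℝ) + 1 = ((i + 1 : ℕ) : ℝ) := by push_cast; ring
  have a3 : N + l + m - (l + i) = N + m - i := by omega
  rw [a1, a2, a3, stmt7_div1 N (l + i), stmt7_div1 i (N + m - i)]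
  have c1 : (N + (l + i)).choose (l + i) = (N + l + i).choose N := by
    rw [show N + (l + i) = N + l + i from by omega]
    rw [show (N + l + i).choose (l + i) = (N + l + i).choose (N + l + i - N) from by
      congr 1; omega]
    exact Nat.choose_symm (by omega)
  have c2 : (i + (N + m - i)).choose (N + m - i) = (N + m).choose i := by
    rw [show i + (N + m - i) = N + m from by omega]
    exact Nat.choose_symm (by omega)
  rw [c1, c2, pow_add]
  ring

/-- factorization of Jacobi polynomials with negative integer parameters. -/
theorem stmt7 (l m : ℕ) (hl : 1 ≤ l) (hm : 1 ≤ m) (n : ℕ) (hn : l + m ≤ n) (x : ℝ) :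
    jacobiP (-(l : ℝ)) (-(m : ℝ)) n x =
      ((x - 1) / 2) ^ l * ((x + 1) / 2) ^ m * jacobiP (l : ℝ) (m : ℝ) (n - l - m) x := by
  set N := n - l - m with hN
  rw [show n = N + l + m from by omega]
  rw [stmt7_stepB N l m hl x, stmt7_mainRS N l m ((x - 1) / 2), stmt7_stepA N l m x,
    show (x + 1) / 2 = 1 + (x - 1) / 2 from by ring]
  ring
end

section
/- Let μ ∈ (0, 1), ν = 2 − μ, and let f be continuous on [−1, 1]. Define u(x) = I_+^ν f(x) − [I_+^2 f(−1) / (2 Γ(2−μ))] (1−x)^{1−μ} for x ∈ (−1, 1). Then u solves the fractional boundary value problem with integral boundary conditions: D_+^ν u(x) = f(x) for every x ∈ (−1, 1), and I_+^μ u(−1) = I_+^μ u(1) = 0. Moreover, I_+^μ u(x) = I_+^2 f(x) − [I_+^2 f(−1)/2] (1−x) for every x ∈ (−1, 1). -/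
open MeasureTheory Filter Finset

lemma Gamma_two_real : Real.Gamma 2 = 1 := by
  have h := Real.Gamma_add_one (s := 1) one_ne_zero
  have : (1:ℝ) + 1 = 2 := by norm_num
  rw [this, Real.Gamma_one] at h
  simpa using h


lemma beta_real {μ : ℝ} (h0 : 0 < μ) (h1 : μ < 1) :
    ∫ t in (0:ℝ)..1, t ^ (μ-1) * (1-t) ^ (1-μ) = Real.Gamma μ * Real.Gamma (2-μ) := by
  have h2 : (0:ℝ) < 2 - μ := by linarith
  have hc := Complex.Gamma_mul_Gamma_eq_betaIntegral (s := (μ:ℂ)) (t := ((2-μ:ℝ):ℂ))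
    (by simpa using h0) (by simpa using h2)
  have hsum : (μ:ℂ) + ((2-μ:ℝ):ℂ) = ((2:ℝ):ℂ) := by push_cast; ring
  rw [hsum] at hc
  simp only [Complex.Gamma_ofReal] at hc
  have hG2 : Real.Gamma 2 = 1 := by
    have := Real.Gamma_add_one (s := 1) one_ne_zero
    simpa [Real.Gamma_one] using this
  rw [hG2] at hc
  have hbeta : Complex.betaIntegral (μ:ℂ) ((2-μ:ℝ):ℂ)
      = ((∫ t in (0:ℝ)..1, t ^ (μ-1) * (1-t) ^ (1-μ) : ℝ) : ℂ) := by
    rw [Complex.betaIntegral, ← intervalIntegral.integral_ofReal]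
    refine intervalIntegral.integral_congr fun x hx => ?_
    rw [Set.uIcc_of_le (by norm_num : (0:ℝ) ≤ 1)] at hx
    rw [Complex.ofReal_mul, Complex.ofReal_cpow hx.1, Complex.ofReal_cpow (by linarith [hx.2] : (0:ℝ) ≤ 1 - x)]
    push_cast
    have h3 : (2 - (μ:ℂ) - 1) = 1 - (μ:ℂ) := by ring
    rw [h3]
  rw [hbeta] at hc
  norm_num at hc
  exact_mod_cast hc.symm

lemma kernel_int {μ : ℝ} (h0 : 0 < μ) (h1 : μ < 1) {x z : ℝ} (hxz : x < z) :
    ∫ y in x..z, (y - x) ^ (μ-1) * (z - y) ^ (1-μ)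
      = (z - x) * (Real.Gamma μ * Real.Gamma (2-μ)) := by
  have hzx : (0:ℝ) < z - x := by linarith
  have hsub := intervalIntegral.integral_comp_mul_add
    (a := (0:ℝ)) (b := 1) (c := z - x) (f := fun y => (y - x) ^ (μ-1) * (z - y) ^ (1-μ)) hzx.ne' x
  have hend0 : (z - x) * 0 + x = x := by ring
  have hend1 : (z - x) * 1 + x = z := by ring
  rw [hend0, hend1] at hsub
  have key : (∫ t in (0:ℝ)..1, (fun y => (y - x) ^ (μ-1) * (z - y) ^ (1-μ)) ((z - x) * t + x))
      = ∫ t in (0:ℝ)..1, t ^ (μ-1) * (1-t) ^ (1-μ) := by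
    refine intervalIntegral.integral_congr fun t ht => ?_
    rw [Set.uIcc_of_le (by norm_num : (0:ℝ) ≤ 1)] at ht
    simp only
    have e1 : (z - x) * t + x - x = (z - x) * t := by ring
    have e2 : z - ((z - x) * t + x) = (z - x) * (1 - t) := by ring
    rw [e1, e2, Real.mul_rpow hzx.le ht.1, Real.mul_rpow hzx.le (by linarith [ht.2] : (0:ℝ) ≤ 1 - t)]
    have e3 : (z - x) ^ (μ-1) * t ^ (μ-1) * ((z - x) ^ (1-μ) * (1-t) ^ (1-μ))
        = ((z - x) ^ (μ-1) * (z - x) ^ (1-μ)) * (t ^ (μ-1) * (1-t) ^ (1-μ)) := by ring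
    rw [e3, ← Real.rpow_add hzx]
    norm_num
  rw [key, beta_real h0 h1] at hsub
  rw [smul_eq_mul] at hsub
  field_simp at hsub
  linarith [hsub]

lemma rpow_integrableOn {μ : ℝ} (h0 : 0 < μ) {x : ℝ} (hx2 : x ≤ 1) :
    IntegrableOn (fun y : ℝ => (y - x) ^ (μ-1)) (Set.Ioc x 1) volume := by
  have h := (intervalIntegral.intervalIntegrable_rpow' (a := 0) (b := 1 - x) (r := μ-1)
    (by linarith)).comp_sub_right x
  rw [zero_add] at h
  have : 1 - x + x = 1 := by ring
  rw [this] at h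
  exact (intervalIntegrable_iff_integrableOn_Ioc_of_le hx2).mp h

lemma fubini_key {μ : ℝ} (h0 : 0 < μ) (h1 : μ < 1) {g : ℝ → ℝ} (hg : Continuous g)
    {M : ℝ} (hM : ∀ z, |g z| ≤ M) {x : ℝ} (hx1 : (-1:ℝ) ≤ x) (hx2 : x ≤ 1) :
    (∫ y in x..1, (y - x) ^ (μ-1) * ∫ z in y..1, (z - y) ^ (1-μ) * g z)
      = (Real.Gamma μ * Real.Gamma (2-μ)) * ∫ z in x..1, (z - x) * g z
    ∧ IntervalIntegrable (fun y => (y - x) ^ (μ-1) * ∫ z in y..1, (z - y) ^ (1-μ) * g z)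
        volume x 1 := by
  have hM0 : 0 ≤ M := le_trans (abs_nonneg _) (hM 0)
  set ν : Measure ℝ := volume.restrict (Set.Ioc x 1) with hν
  set T : ℝ × ℝ → ℝ := Set.indicator {q : ℝ × ℝ | q.1 < q.2}
    (fun p => (p.1 - x) ^ (μ-1) * ((p.2 - p.1) ^ (1-μ) * g p.2)) with hTdef
  -- measurability
  have hTm : Measurable T := by
    apply Measurable.indicator
    · fun_prop
    · exact measurableSet_lt measurable_fst measurable_snd
  -- integrability on the product
  have hφ : IntegrableOn (fun y : ℝ => (y - x) ^ (μ-1)) (Set.Ioc x 1) volume :=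
    rpow_integrableOn h0 hx2
  have hconst : IntegrableOn (fun _ : ℝ => (2:ℝ) ^ (1-μ) * M) (Set.Ioc x 1) volume := by
    exact integrableOn_const measure_Ioc_lt_top.ne
  have hbound : Integrable (fun p : ℝ × ℝ => (p.1 - x) ^ (μ-1) * ((2:ℝ) ^ (1-μ) * M))
      (ν.prod ν) := Integrable.mul_prod hφ hconst
  have hT : Integrable T (ν.prod ν) := by
    refine hbound.mono' hTm.aestronglyMeasurable ?_
    rw [hν, Measure.prod_restrict]
    filter_upwards [ae_restrict_mem (measurableSet_Ioc.prod measurableSet_Ioc)] with p hp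
    obtain ⟨hp1, hp2⟩ := hp
    by_cases hlt : p.1 < p.2
    · have hT1 : T p = (p.1 - x) ^ (μ-1) * ((p.2 - p.1) ^ (1-μ) * g p.2) := by
        simp [hTdef, Set.indicator_apply, hlt]
      rw [hT1, Real.norm_eq_abs, abs_mul]
      have h1 : 0 < p.1 - x := by simpa using hp1.1
      have h2 : (0:ℝ) ≤ p.2 - p.1 := by linarith
      rw [abs_of_nonneg (Real.rpow_nonneg h1.le _), abs_mul,
        abs_of_nonneg (Real.rpow_nonneg h2 _)]
      refine mul_le_mul_of_nonneg_left ?_ (Real.rpow_nonneg h1.le _)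
      refine mul_le_mul ?_ (hM p.2) (abs_nonneg _) (Real.rpow_nonneg (by norm_num) _)
      exact Real.rpow_le_rpow h2 (by nlinarith [hp1.1, hp2.2]) (by linarith)
    · have hT0 : T p = 0 := by simp [hTdef, Set.indicator_apply, hlt]
      rw [hT0, norm_zero]
      have h1 : (0:ℝ) ≤ p.1 - x := by linarith [hp1.1]
      positivity
  -- the inner-integral identity (side A)
  have hA : ∀ y ∈ Set.Ioc x 1, (∫ z, T (y, z) ∂ν)
      = (y - x) ^ (μ-1) * ∫ z in y..1, (z - y) ^ (1-μ) * g z := by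
    intro y hy
    have hfun : (fun z => T (y, z))
        = Set.indicator (Set.Ioi y) (fun z => (y - x) ^ (μ-1) * ((z - y) ^ (1-μ) * g z)) := by
      funext z
      by_cases hz : y < z
      · simp [hTdef, Set.indicator_apply, hz]
      · simp [hTdef, Set.indicator_apply, hz]
    rw [hfun, MeasureTheory.integral_indicator measurableSet_Ioi, hν,
      Measure.restrict_restrict measurableSet_Ioi]
    have hset : Set.Ioi y ∩ Set.Ioc x 1 = Set.Ioc y 1 := by
      ext z
      simp only [Set.mem_inter_iff, Set.mem_Ioi, Set.mem_Ioc]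
      constructor
      · rintro ⟨h1, h2, h3⟩; exact ⟨h1, h3⟩
      · rintro ⟨h1, h2⟩; exact ⟨h1, lt_trans hy.1 h1, h2⟩
    rw [hset, MeasureTheory.integral_const_mul, ← intervalIntegral.integral_of_le hy.2]
  -- the inner-integral identity (side B)
  have hB : ∀ z ∈ Set.Ioc x 1, (∫ y, T (y, z) ∂ν)
      = (Real.Gamma μ * Real.Gamma (2-μ)) * ((z - x) * g z) := by
    intro z hz
    have hfun : (fun y => T (y, z))
        = Set.indicator (Set.Iio z) (fun y => ((y - x) ^ (μ-1) * (z - y) ^ (1-μ)) * g z) := by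
      funext y
      by_cases hyz : y < z
      · simp only [hTdef, Set.indicator_apply, Set.mem_setOf_eq, Set.mem_Iio, if_pos hyz]
        ring
      · simp [hTdef, Set.indicator_apply, hyz]
    rw [hfun, MeasureTheory.integral_indicator measurableSet_Iio, hν,
      Measure.restrict_restrict measurableSet_Iio]
    have hset : Set.Iio z ∩ Set.Ioc x 1 = Set.Ioo x z := by
      ext y
      simp only [Set.mem_inter_iff, Set.mem_Iio, Set.mem_Ioo, Set.mem_Ioc]
      constructor
      · rintro ⟨h1, h2, h3⟩; exact ⟨h2, h1⟩
      · rintro ⟨h1, h2⟩; exact ⟨h2, h1, le_trans h2.le hz.2⟩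
    rw [hset, ← MeasureTheory.integral_Ioc_eq_integral_Ioo,
      ← intervalIntegral.integral_of_le hz.1.le,
      intervalIntegral.integral_mul_const, kernel_int h0 h1 hz.1]
    ring
  -- swap
  have hswap := MeasureTheory.integral_integral_swap (μ := ν) (ν := ν)
    (f := fun y z => T (y, z)) hT
  -- conclusion, part 1
  constructor
  · rw [intervalIntegral.integral_of_le hx2]
    calc ∫ y in Set.Ioc x 1, (y - x) ^ (μ-1) * ∫ z in y..1, (z - y) ^ (1-μ) * g z
        = ∫ y, (∫ z, T (y, z) ∂ν) ∂ν := by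
          rw [hν]
          exact (setIntegral_congr_fun measurableSet_Ioc (fun y hy => (hA y hy).symm))
      _ = ∫ z, (∫ y, T (y, z) ∂ν) ∂ν := hswap
      _ = ∫ z in Set.Ioc x 1, (Real.Gamma μ * Real.Gamma (2-μ)) * ((z - x) * g z) ∂volume := by
          rw [hν]
          exact setIntegral_congr_fun measurableSet_Ioc (fun z hz => hB z hz)
      _ = (Real.Gamma μ * Real.Gamma (2-μ)) * ∫ z in x..1, (z - x) * g z := by
          rw [MeasureTheory.integral_const_mul, ← intervalIntegral.integral_of_le hx2]
  · rw [intervalIntegrable_iff_integrableOn_Ioc_of_le hx2]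
    have := hT.integral_prod_left
    refine this.congr ?_
    filter_upwards [ae_restrict_mem measurableSet_Ioc] with y hy
    exact hA y hy

lemma main_formula {μ : ℝ} (h0 : 0 < μ) (h1 : μ < 1) {f g : ℝ → ℝ}
    (hg : Continuous g) (hfg : ∀ y ∈ Set.Icc (-1:ℝ) 1, f y = g y)
    {M : ℝ} (hM : ∀ z, |g z| ≤ M) {u : ℝ → ℝ}
    (hu : ∀ x : ℝ, u x =
      Iplus (2 - μ) f x - Iplus 2 f (-1) / (2 * Real.Gamma (2 - μ)) * (1 - x) ^ (1 - μ))
    {x : ℝ} (hx1 : (-1:ℝ) ≤ x) (hx2 : x ≤ 1) :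
    Iplus μ u x = (∫ z in x..1, (z - x) * g z) - Iplus 2 f (-1) / 2 * (1 - x) := by
  have hGm : 0 < Real.Gamma μ := Real.Gamma_pos_of_pos h0
  have hGn : 0 < Real.Gamma (2 - μ) := Real.Gamma_pos_of_pos (by linarith)
  rcases eq_or_lt_of_le hx2 with hxe | hxlt
  · subst hxe
    simp [Iplus]
  set c : ℝ := Iplus 2 f (-1) / (2 * Real.Gamma (2 - μ)) with hc
  -- rewrite the integrand on [x,1]
  have hint : ∀ y ∈ Set.uIcc x 1, (y - x) ^ (μ - 1) * u y
      = (1 / Real.Gamma (2 - μ)) * ((y - x) ^ (μ - 1) * ∫ z in y..1, (z - y) ^ (1 - μ) * g z)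
        - c * ((y - x) ^ (μ - 1) * (1 - y) ^ (1 - μ)) := by
    intro y hy
    rw [Set.uIcc_of_le hx2] at hy
    have hy1 : y ≤ 1 := hy.2
    rw [hu y]
    have hIp : Iplus (2 - μ) f y
        = (1 / Real.Gamma (2 - μ)) * ∫ z in y..1, (z - y) ^ (1 - μ) * g z := by
      rw [Iplus]
      congr 1
      refine intervalIntegral.integral_congr fun z hz => ?_
      rw [Set.uIcc_of_le hy1] at hz
      have h2 : (2 - μ) - 1 = 1 - μ := by ring
      rw [h2, hfg z ⟨le_trans hx1 (le_trans hy.1 hz.1), hz.2⟩]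
    rw [hIp]
    ring
  have hfub := fubini_key h0 h1 hg hM hx1 hx2
  have hBint : IntervalIntegrable (fun y => (y - x) ^ (μ - 1) * (1 - y) ^ (1 - μ))
      volume x 1 := by
    rw [intervalIntegrable_iff_integrableOn_Ioc_of_le hx2]
    have hcont : Continuous (fun y : ℝ => (1 - y) ^ (1 - μ)) := by
      apply Continuous.rpow_const (by fun_prop)
      intro y; right; linarith
    have := Integrable.bdd_mul (c := (2:ℝ) ^ (1 - μ))
      (rpow_integrableOn h0 hx2) hcont.aestronglyMeasurable ?_
    · exact this.congr (Filter.Eventually.of_forall fun y => by ring)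
    · filter_upwards [ae_restrict_mem measurableSet_Ioc] with y hy
      rw [Real.norm_eq_abs, abs_of_nonneg (Real.rpow_nonneg (by linarith [hy.2]) _)]
      exact Real.rpow_le_rpow (by linarith [hy.2]) (by linarith [hy.1, hx1]) (by linarith)
  have hsplit : (∫ y in x..1, (y - x) ^ (μ - 1) * u y)
      = (1 / Real.Gamma (2 - μ))
          * (∫ y in x..1, (y - x) ^ (μ - 1) * ∫ z in y..1, (z - y) ^ (1 - μ) * g z)
        - c * ∫ y in x..1, (y - x) ^ (μ - 1) * (1 - y) ^ (1 - μ) := by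
    rw [intervalIntegral.integral_congr hint,
      intervalIntegral.integral_sub ((hfub.2).const_mul _) (hBint.const_mul _),
      intervalIntegral.integral_const_mul, intervalIntegral.integral_const_mul]
  have hker : (∫ y in x..1, (y - x) ^ (μ - 1) * (1 - y) ^ (1 - μ))
      = (1 - x) * (Real.Gamma μ * Real.Gamma (2 - μ)) := kernel_int h0 h1 hxlt
  rw [Iplus, hsplit, hfub.1, hker, hc]
  field_simp

/-- solution formula (5.13)-(5.14) of the fractional boundary value
problem with integral boundary conditions. -/
theorem stmt17 (μ : ℝ) (hμ : μ ∈ Set.Ioo (0 : ℝ) 1) (f : ℝ → ℝ)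
    (hf : ContinuousOn f (Set.Icc (-1) 1)) :
    ∀ u : ℝ → ℝ,
      (∀ x : ℝ, u x =
        Iplus (2 - μ) f x - Iplus 2 f (-1) / (2 * Real.Gamma (2 - μ)) * (1 - x) ^ (1 - μ)) →
      (∀ x ∈ Set.Ioo (-1 : ℝ) 1, Dplus (2 - μ) 2 u x = f x) ∧
      Iplus μ u (-1) = 0 ∧ Iplus μ u 1 = 0 ∧
      (∀ x ∈ Set.Ioo (-1 : ℝ) 1,
        Iplus μ u x = Iplus 2 f x - Iplus 2 f (-1) / 2 * (1 - x)) := by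
  obtain ⟨h0, h1⟩ := hμ
  intro u hu
  set g : ℝ → ℝ := fun y => f (max (-1) (min 1 y)) with hgdef
  have hmaps : ∀ y : ℝ, max (-1) (min 1 y) ∈ Set.Icc (-1:ℝ) 1 :=
    fun y => ⟨le_max_left _ _, max_le (by norm_num) (min_le_left _ _)⟩
  have hgc : Continuous g := hf.comp_continuous (by fun_prop) hmaps
  have hfg : ∀ y ∈ Set.Icc (-1:ℝ) 1, f y = g y := by
    intro y hy
    rw [hgdef]
    simp only
    rw [min_eq_right hy.2, max_eq_right hy.1]
  obtain ⟨M, hM⟩ : ∃ M, ∀ z, |g z| ≤ M := by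
    obtain ⟨C, hC⟩ := (isCompact_Icc (a := (-1:ℝ)) (b := 1)).exists_bound_of_continuousOn hf
    exact ⟨C, fun z => hC _ (hmaps z)⟩
  have hMF : ∀ {x : ℝ}, -1 ≤ x → x ≤ 1 →
      Iplus μ u x = (∫ z in x..1, (z - x) * g z) - Iplus 2 f (-1) / 2 * (1 - x) :=
    fun hx1 hx2 => main_formula h0 h1 hgc hfg hM hu hx1 hx2
  have hI2 : ∀ x : ℝ, -1 ≤ x → x ≤ 1 → Iplus 2 f x = ∫ z in x..1, (z - x) * g z := by
    intro x hx1 hx2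
    rw [Iplus, Gamma_two_real, show (1:ℝ)/1 = 1 by norm_num, one_mul]
    refine intervalIntegral.integral_congr fun z hz => ?_
    rw [Set.uIcc_of_le hx2] at hz
    rw [show (2:ℝ) - 1 = 1 by norm_num, Real.rpow_one, hfg z ⟨le_trans hx1 hz.1, hz.2⟩]
  refine ⟨?_, ?_, ?_, ?_⟩
  · -- the fractional ODE
    rintro x ⟨hx1, hx2⟩
    set C : ℝ := Iplus 2 f (-1) / 2 with hCdef
    set φ : ℝ → ℝ :=
      fun t => (∫ z in t..1, z * g z) - t * (∫ z in t..1, g z) - C * (1 - t) with hφdef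
    have hEq : Set.EqOn (Iplus μ u) φ (Set.Ioo (-1:ℝ) 1) := by
      intro t ht
      rw [hMF ht.1.le ht.2.le, hφdef]
      simp only
      have hsplit : (∫ z in t..1, (z - t) * g z)
          = (∫ z in t..1, z * g z) - t * (∫ z in t..1, g z) := by
        calc (∫ z in t..1, (z - t) * g z)
            = ∫ z in t..1, (z * g z - t * g z) :=
              intervalIntegral.integral_congr fun z _ => by ring
          _ = (∫ z in t..1, z * g z) - ∫ z in t..1, t * g z :=
              intervalIntegral.integral_sub
                ((continuous_id.mul hgc).intervalIntegrable _ _)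
                ((continuous_const.mul hgc).intervalIntegrable _ _)
          _ = (∫ z in t..1, z * g z) - t * (∫ z in t..1, g z) := by
              rw [intervalIntegral.integral_const_mul]
      rw [hsplit]
    have hG : ∀ t : ℝ, HasDerivAt (fun s => ∫ z in s..1, g z) (-g t) t := by
      intro t
      have h := intervalIntegral.integral_hasDerivAt_right (hgc.intervalIntegrable 1 t)
        (hgc.stronglyMeasurableAtFilter _ _) hgc.continuousAt
      have heq : (fun s => ∫ z in s..1, g z) = fun s => -(∫ z in (1:ℝ)..s, g z) := by
        funext s; rw [intervalIntegral.integral_symm]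
      rw [heq]
      exact h.neg
    have hH : ∀ t : ℝ, HasDerivAt (fun s => ∫ z in s..1, z * g z) (-(t * g t)) t := by
      intro t
      have hzgc : Continuous fun z : ℝ => z * g z := continuous_id.mul hgc
      have h := intervalIntegral.integral_hasDerivAt_right (hzgc.intervalIntegrable 1 t)
        (hzgc.stronglyMeasurableAtFilter _ _) hzgc.continuousAt
      have heq : (fun s => ∫ z in s..1, z * g z) = fun s => -(∫ z in (1:ℝ)..s, z * g z) := by
        funext s; rw [intervalIntegral.integral_symm]
      rw [heq]
      exact h.neg
    have hφ' : ∀ t : ℝ, HasDerivAt φ (C - (∫ z in t..1, g z)) t := by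
      intro t
      have hc : HasDerivAt (fun t : ℝ => C * (1 - t)) (-C) t := by
        simpa using ((hasDerivAt_id t).const_sub 1).const_mul C
      have h := ((hH t).sub ((hasDerivAt_id t).mul (hG t))).sub hc
      refine h.congr_deriv ?_
      simp only [id_eq]
      ring
    have hderivφ : deriv φ = fun t => C - (∫ z in t..1, g z) :=
      funext fun t => (hφ' t).deriv
    have hφ'' : deriv (deriv φ) x = g x := by
      rw [hderivφ]
      have h : HasDerivAt (fun t => C - (∫ z in t..1, g z)) (g x) x := by
        simpa using (hG x).const_sub C
      exact h.deriv
    have hd1 : Set.EqOn (deriv (Iplus μ u)) (deriv φ) (Set.Ioo (-1:ℝ) 1) := fun t ht =>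
      (Filter.eventuallyEq_of_mem (isOpen_Ioo.mem_nhds ht) hEq).deriv_eq
    have hd2 : deriv (deriv (Iplus μ u)) x = deriv (deriv φ) x :=
      (Filter.eventuallyEq_of_mem (isOpen_Ioo.mem_nhds (Set.mem_Ioo.mpr ⟨hx1, hx2⟩)) hd1).deriv_eq
    rw [Dplus]
    have hcast : ((2:ℕ):ℝ) - (2 - μ) = μ := by push_cast; ring
    rw [hcast]
    have h2d : iteratedDeriv 2 (Iplus μ u) = deriv (deriv (Iplus μ u)) := by
      rw [show (2:ℕ) = 1 + 1 from rfl, iteratedDeriv_succ, iteratedDeriv_one]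
    rw [h2d, hd2, hφ'']
    rw [hfg x ⟨hx1.le, hx2.le⟩]
    norm_num
  · rw [hMF (le_refl (-1)) (by norm_num), ← hI2 (-1) (le_refl (-1)) (by norm_num)]
    ring
  · simp [Iplus]
  · rintro x ⟨hx1, hx2⟩
    rw [hMF hx1.le hx2.le, hI2 x hx1.le hx2.le]
end
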